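/- arXiv:2406.07252 — 2 statements merged into one kernel-verified Lean document; each statement's English description precedes it below -/
import Mathlib

section
/- For a Φ-expander multigraph G with m edges, the electrical flow routing A = Bᵀ L⁺ satisfies max over edges e of ‖Bᵀ L⁺ χ_e‖₁ ≤ 3 ln(2m)/Φ, where χ_e is the unit demand on the endpoints of e. -/
noncomputable section
open Matrix ENNReal

variable {V E : Type*} [Fintype V] [Fintype E] [DecidableEq V]

/-- The edge-vertex incidence matrix of a multigraph whose edge `e` is oriented
from `tail e` to `head e`. -/
def incMatrix (tail head : E → V) : Matrix V E ℝ :=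
  fun v e => if v = tail e then 1 else if v = head e then -1 else 0

/-- `Lp` satisfies the four Penrose conditions for `L`. -/
def IsMoorePenrose {V : Type*} [Fintype V] (L Lp : Matrix V V ℝ) : Prop :=
  L * Lp * L = L ∧ Lp * L * Lp = Lp ∧ (L * Lp)ᵀ = L * Lp ∧ (Lp * L)ᵀ = Lp * L

/-- Connectivity, expressed through the Laplacian: the kernel of `L` consists
exactly of the constant vectors. -/
def IsConnectedLap {V : Type*} [Fintype V] (L : Matrix V V ℝ) : Prop :=
  ∀ x : V → ℝ, L.mulVec x = 0 → ∃ c : ℝ, ∀ v, x v = c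

/-- The volume of a vertex set: the sum of the degrees of its vertices. -/
def gvol (tail head : E → V) (S : Finset V) : ℕ :=
  ∑ e : E, ((if tail e ∈ S then 1 else 0) + (if head e ∈ S then 1 else 0))

/-- The number of edges with exactly one endpoint in `S`. -/
def bdry (tail head : E → V) (S : Finset V) : ℕ :=
  (Finset.univ.filter fun e : E =>
    (tail e ∈ S ∧ head e ∉ S) ∨ (tail e ∉ S ∧ head e ∈ S)).card

/-- The multigraph is a `Φ`-expander: `|∂S| ≥ Φ·vol(S)` whenever
`vol(S) ≤ vol(V)/2`. -/
def IsExpander (tail head : E → V) (Φ : ℝ) : Prop :=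
  ∀ S : Finset V, (gvol tail head S : ℝ) ≤ (gvol tail head Finset.univ : ℝ) / 2 →
    (bdry tail head S : ℝ) ≥ Φ * gvol tail head S

/-- The ℓp norm of a finite real vector, for `p ∈ [1,∞]`. -/
def lpNormE {n : Type*} [Fintype n] (p : ℝ≥0∞) (x : n → ℝ) : ℝ :=
  if p = ⊤ then ⨆ i, |x i| else (∑ i, |x i| ^ p.toReal) ^ (1 / p.toReal)

/-- Operator norm of a matrix from ℓp to ℓp, for `p ∈ [1,∞]`. -/
def opNormE {m n : Type*} [Fintype m] [Fintype n] (p : ℝ≥0∞) (X : Matrix m n ℝ) : ℝ :=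
  sSup {c | ∃ x : n → ℝ, x ≠ 0 ∧ c = lpNormE p (X.mulVec x) / lpNormE p x}

section AuxLemmas

/-- Harmonic sum bound: `∑_{j<m} 1/(j+1) ≤ 1 + log m`. -/
lemma harm_le : ∀ m : ℕ, 1 ≤ m → ∑ j ∈ Finset.range m, (1:ℝ)/(j+1) ≤ 1 + Real.log m := by
  intro m
  induction m with
  | zero => intro h; omega
  | succ k ih =>
    intro _
    rcases Nat.eq_zero_or_pos k with hk | hk
    · subst hk; simp
    · rw [Finset.sum_range_succ]
      have h1 : (∑ j ∈ Finset.range k, (1:ℝ)/(j+1)) ≤ 1 + Real.log k := ih hk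
      have hk0 : (0:ℝ) < k := by exact_mod_cast hk
      have hk1 : (0:ℝ) < (k:ℝ) + 1 := by linarith
      have hlog : Real.log ((k:ℝ)/((k:ℝ)+1)) ≤ (k:ℝ)/((k:ℝ)+1) - 1 :=
        Real.log_le_sub_one_of_pos (by positivity)
      have hd : Real.log ((k:ℝ)/((k:ℝ)+1)) = Real.log k - Real.log ((k:ℝ)+1) :=
        Real.log_div (ne_of_gt hk0) (ne_of_gt hk1)
      have he : (k:ℝ)/((k:ℝ)+1) - 1 = -(1/((k:ℝ)+1)) := by field_simp; ring
      rw [hd, he] at hlog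
      push_cast
      linarith

/-- Sum of reciprocal ranks is at most the harmonic number. -/
lemma sum_inv_rank_le {α : Type*} [DecidableEq α] (a : α → ℝ) (s₀ : Finset α) :
    ∑ x ∈ s₀, (1:ℝ)/((s₀.filter fun y => a y ≤ a x).card)
      ≤ ∑ j ∈ Finset.range s₀.card, (1:ℝ)/(j+1) := by
  classical
  suffices h : ∀ (n : ℕ) (s : Finset α), s.card = n →
      ∑ x ∈ s, (1:ℝ)/((s.filter fun y => a y ≤ a x).card)
      ≤ ∑ j ∈ Finset.range n, (1:ℝ)/(j+1) by
    simpa using h s₀.card s₀ rfl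
  intro n
  induction n with
  | zero =>
    intro s hn
    have : s = ∅ := Finset.card_eq_zero.mp hn
    subst this; simp
  | succ k ih =>
    intro s hn
    have hne : s.Nonempty := Finset.card_pos.mp (by omega)
    obtain ⟨x₀, hx₀s, hx₀max⟩ := s.exists_max_image a hne
    set s' := s.erase x₀ with hs'
    have hcard' : s'.card = k := by
      rw [hs', Finset.card_erase_of_mem hx₀s, hn]; rfl
    have hfull : s.filter (fun y => a y ≤ a x₀) = s := by
      apply Finset.filter_true_of_mem
      intro y hy; exact hx₀max y hy
    have hsum : ∑ x ∈ s, (1:ℝ)/((s.filter fun y => a y ≤ a x).card)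
        = (1:ℝ)/(s.card) + ∑ x ∈ s', (1:ℝ)/((s.filter fun y => a y ≤ a x).card) := by
      rw [hs', ← Finset.add_sum_erase s _ hx₀s, hfull]
    rw [hsum]
    have hstep : ∑ x ∈ s', (1:ℝ)/((s.filter fun y => a y ≤ a x).card)
        ≤ ∑ x ∈ s', (1:ℝ)/((s'.filter fun y => a y ≤ a x).card) := by
      apply Finset.sum_le_sum
      intro x hx
      have hsub : s'.filter (fun y => a y ≤ a x) ⊆ s.filter (fun y => a y ≤ a x) :=
        Finset.filter_subset_filter _ (Finset.erase_subset _ _)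
      have hposs' : 0 < (s'.filter fun y => a y ≤ a x).card := by
        apply Finset.card_pos.mpr
        exact ⟨x, Finset.mem_filter.mpr ⟨hx, le_refl _⟩⟩
      have hle : (s'.filter fun y => a y ≤ a x).card ≤ (s.filter fun y => a y ≤ a x).card :=
        Finset.card_le_card hsub
      apply one_div_le_one_div_of_le
      · exact_mod_cast hposs'
      · exact_mod_cast hle
    have hih := ih s' hcard'
    have hrange : ∑ j ∈ Finset.range (k+1), (1:ℝ)/(j+1)
        = ∑ j ∈ Finset.range k, (1:ℝ)/(j+1) + 1/(k+1) := by
      rw [Finset.sum_range_succ]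
    rw [hrange, hn]
    push_cast
    linarith

/-- The next element of `s` strictly above `u` (junk value if none). -/
def nxt (s : Finset ℝ) (u : ℝ) : ℝ :=
  if h : (s.filter fun w => u < w).Nonempty then (s.filter fun w => u < w).min' h else u + 1

lemma nxt_lt (s : Finset ℝ) (u : ℝ) (h : ∃ w ∈ s, u < w) : u < nxt s u := by
  classical
  obtain ⟨w, hw, huw⟩ := h
  have hne : (s.filter fun w => u < w).Nonempty := ⟨w, Finset.mem_filter.mpr ⟨hw, huw⟩⟩
  rw [nxt, dif_pos hne]
  have := Finset.min'_mem _ hne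
  exact (Finset.mem_filter.mp this).2

lemma nxt_mem (s : Finset ℝ) (u : ℝ) (h : ∃ w ∈ s, u < w) : nxt s u ∈ s := by
  classical
  obtain ⟨w, hw, huw⟩ := h
  have hne : (s.filter fun w => u < w).Nonempty := ⟨w, Finset.mem_filter.mpr ⟨hw, huw⟩⟩
  rw [nxt, dif_pos hne]
  exact (Finset.mem_filter.mp (Finset.min'_mem _ hne)).1

lemma nxt_le (s : Finset ℝ) (u : ℝ) {w : ℝ} (hw : w ∈ s) (huw : u < w) : nxt s u ≤ w := by
  classical
  have hne : (s.filter fun w => u < w).Nonempty := ⟨w, Finset.mem_filter.mpr ⟨hw, huw⟩⟩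
  rw [nxt, dif_pos hne]
  exact Finset.min'_le _ _ (Finset.mem_filter.mpr ⟨hw, huw⟩)

/-- Telescoping: summing the gaps of `s` between `a` and `b` gives `b - a`. -/
lemma telescope_gaps (s : Finset ℝ) :
    ∀ (n : ℕ) (a b : ℝ), a ∈ s → b ∈ s → a ≤ b →
      (s.filter fun u => a ≤ u ∧ u < b).card = n →
      ∑ u ∈ s.filter (fun u => a ≤ u ∧ u < b), (nxt s u - u) = b - a := by
  classical
  intro n
  induction n with
  | zero =>
    intro a b ha hb hab hcard
    have hempty : s.filter (fun u => a ≤ u ∧ u < b) = ∅ := Finset.card_eq_zero.mp hcard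
    have hnlt : ¬ a < b := by
      intro hlt
      have : a ∈ s.filter (fun u => a ≤ u ∧ u < b) :=
        Finset.mem_filter.mpr ⟨ha, le_refl _, hlt⟩
      rw [hempty] at this; exact absurd this (Finset.notMem_empty _)
    have : a = b := le_antisymm hab (le_of_not_gt hnlt)
    rw [hempty, this]; simp
  | succ k ih =>
    intro a b ha hb hab hcard
    have hlt : a < b := by
      rcases lt_or_eq_of_le hab with h | h
      · exact h
      · exfalso; subst h
        have : s.filter (fun u => a ≤ u ∧ u < a) = ∅ := by
          apply Finset.filter_false_of_mem
          rintro u _ ⟨h1, h2⟩; exact absurd (lt_of_le_of_lt h1 h2) (lt_irrefl a)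
        rw [this] at hcard; simp at hcard
    have hex : ∃ w ∈ s, a < w := ⟨b, hb, hlt⟩
    set a' := nxt s a with ha'
    have haa' : a < a' := nxt_lt s a hex
    have ha's : a' ∈ s := nxt_mem s a hex
    have ha'b : a' ≤ b := nxt_le s a hb hlt
    have hset : s.filter (fun u => a ≤ u ∧ u < b)
        = insert a (s.filter fun u => a' ≤ u ∧ u < b) := by
      ext u
      simp only [Finset.mem_filter, Finset.mem_insert]
      constructor
      · rintro ⟨hus, hau, hub⟩
        rcases eq_or_lt_of_le hau with h | h
        · exact Or.inl h.symm
        · exact Or.inr ⟨hus, nxt_le s a hus h, hub⟩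
      · rintro (rfl | ⟨hus, hau, hub⟩)
        · exact ⟨ha, le_refl _, hlt⟩
        · exact ⟨hus, le_trans (le_of_lt haa') hau, hub⟩
    have hnotmem : a ∉ (s.filter fun u => a' ≤ u ∧ u < b) := by
      intro hmem
      have := (Finset.mem_filter.mp hmem).2.1
      exact absurd (lt_of_lt_of_le haa' this) (lt_irrefl a)
    have hcard' : (s.filter fun u => a' ≤ u ∧ u < b).card = k := by
      have h2 := hcard
      rw [hset, Finset.card_insert_of_notMem hnotmem] at h2
      omega
    rw [hset, Finset.sum_insert hnotmem, ih a' b ha's hb ha'b hcard']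
    ring

/-- Moore-Penrose pseudoinverse applied to a mean-zero vector solves the Laplacian system. -/
lemma lap_pinv_solves {V E : Type*} [Fintype V] [Fintype E] [DecidableEq V]
    (tail head : E → V) (hloop : ∀ e, tail e ≠ head e)
    (B : Matrix V E ℝ) (hB : B = incMatrix tail head)
    (L : Matrix V V ℝ) (hL : L = B * Bᵀ)
    (hconn : IsConnectedLap L)
    (Lp : Matrix V V ℝ)
    (p1 : L * Lp * L = L) (p3 : (L * Lp)ᵀ = L * Lp)
    (χ : V → ℝ) (hχsum : ∑ v, χ v = 0)
    (hVne : Nonempty V) :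
    L.mulVec (Lp.mulVec χ) = χ := by
  classical
  have hLsymm : Lᵀ = L := by rw [hL, Matrix.transpose_mul, Matrix.transpose_transpose]
  have hBsplit : ∀ v g, B v g
      = (if v = tail g then (1:ℝ) else 0) - (if v = head g then (1:ℝ) else 0) := by
    intro v g; rw [hB]; simp only [incMatrix]
    by_cases h1 : v = tail g
    · have h2 : v ≠ head g := by rw [h1]; exact hloop g
      simp [h1, h2, hloop g]
    · by_cases h2 : v = head g <;> simp [h1, h2, hloop g, Ne.symm (hloop g)]
  have hBcolsum : ∀ g, ∑ v, B v g = 0 := by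
    intro g
    simp only [hBsplit]
    rw [Finset.sum_sub_distrib]
    rw [Finset.sum_ite_eq' Finset.univ (tail g) (fun _ => (1:ℝ))]
    rw [Finset.sum_ite_eq' Finset.univ (head g) (fun _ => (1:ℝ))]
    simp
  have hcol : ∀ w, ∑ v, L v w = 0 := by
    intro w; rw [hL]
    simp only [Matrix.mul_apply]
    rw [Finset.sum_comm]
    apply Finset.sum_eq_zero; intro g _
    rw [← Finset.sum_mul, hBcolsum g, zero_mul]
  have hsum_mulVec : ∀ x : V → ℝ, ∑ v, (L.mulVec x) v = 0 := by
    intro x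
    simp only [Matrix.mulVec, dotProduct]
    rw [Finset.sum_comm]
    apply Finset.sum_eq_zero; intro w _
    rw [← Finset.sum_mul, hcol w, zero_mul]
  have hLLLp : L * (L * Lp) = L := by
    have h1 : (L * (L * Lp))ᵀ = L := by
      rw [Matrix.transpose_mul, p3, hLsymm]
      exact p1
    have := congrArg Matrix.transpose h1
    rwa [Matrix.transpose_transpose, hLsymm] at this
  set ψ := Lp.mulVec χ with hψ
  set w := χ - L.mulVec ψ with hw
  have hLw : L.mulVec w = 0 := by
    rw [hw, Matrix.mulVec_sub]
    rw [hψ, Matrix.mulVec_mulVec, Matrix.mulVec_mulVec, Matrix.mul_assoc, hLLLp]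
    simp
  obtain ⟨c, hc⟩ := hconn w hLw
  have hwsum : ∑ v, w v = 0 := by
    rw [hw]
    simp only [Pi.sub_apply]
    rw [Finset.sum_sub_distrib, hχsum, hsum_mulVec]
    simp
  have hcard : 0 < Fintype.card V := Fintype.card_pos_iff.mpr hVne
  have hccard : (Fintype.card V : ℝ) * c = 0 := by
    rw [← hwsum]
    rw [Finset.sum_congr rfl (fun v _ => hc v)]
    simp [Finset.card_univ, mul_comm]
  have hc0 : c = 0 := by
    have hne : (Fintype.card V : ℝ) ≠ 0 := by positivity
    exact (mul_eq_zero.mp hccard).resolve_left hne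
  have hw0 : w = 0 := by
    funext v; rw [hc v, hc0]; rfl
  have h := hw0
  rw [hw, sub_eq_zero] at h
  exact h.symm

end AuxLemmas

/-- Main theorem. -/
theorem electrical_routing_l1_bound (tail head : E → V) (hloop : ∀ e, tail e ≠ head e)
    (B : Matrix V E ℝ) (hB : B = incMatrix tail head)
    (L : Matrix V V ℝ) (hL : L = B * Bᵀ)
    (hconn : IsConnectedLap L)
    (Lp : Matrix V V ℝ) (hLp : IsMoorePenrose L Lp)
    (m : ℕ) (hm : m = Fintype.card E) (hm1 : 1 ≤ m)
    (Φ : ℝ) (hΦ : 0 < Φ) (hexp : IsExpander tail head Φ)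
    (e : E) :
    ∑ f, |(Bᵀ * Lp).mulVec
        (fun v => if v = tail e then 1 else if v = head e then -1 else 0) f|
      ≤ 3 * Real.log (2 * m) / Φ := by
  classical
  obtain ⟨p1, p2, p3, p4⟩ := hLp
  set χ : V → ℝ := fun v => if v = tail e then 1 else if v = head e then -1 else 0 with hχdef
  have hBsplit : ∀ v g, B v g
      = (if v = tail g then (1:ℝ) else 0) - (if v = head g then (1:ℝ) else 0) := by
    intro v g; rw [hB]; simp only [incMatrix]
    by_cases h1 : v = tail g
    · have h2 : v ≠ head g := by rw [h1]; exact hloop g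
      simp [h1, h2, hloop g]
    · by_cases h2 : v = head g <;> simp [h1, h2, hloop g, Ne.symm (hloop g)]
  have hBcolsum : ∀ g, ∑ v, B v g = 0 := by
    intro g
    simp only [hBsplit]
    rw [Finset.sum_sub_distrib]
    rw [Finset.sum_ite_eq' Finset.univ (tail g) (fun _ => (1:ℝ))]
    rw [Finset.sum_ite_eq' Finset.univ (head g) (fun _ => (1:ℝ))]
    simp
  have hχB : ∀ v, χ v = B v e := by
    intro v; rw [hB, hχdef]; rfl
  have hχsum : ∑ v, χ v = 0 := by
    rw [Finset.sum_congr rfl (fun v _ => hχB v)]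
    exact hBcolsum e
  have hVne : Nonempty V := ⟨tail e⟩
  set ψ : V → ℝ := Lp.mulVec χ with hψdef
  have hLψ : L.mulVec ψ = χ :=
    lap_pinv_solves tail head hloop B hB L hL hconn Lp p1 p3 χ hχsum hVne
  set f : E → ℝ := Bᵀ.mulVec ψ with hfdef
  have hf : ∀ g, f g = ψ (tail g) - ψ (head g) := by
    intro g
    show (Bᵀ.mulVec ψ) g = _
    simp only [Matrix.mulVec, dotProduct, Matrix.transpose_apply]
    rw [Finset.sum_congr rfl (fun v _ => by rw [hBsplit v g])]
    simp only [sub_mul, one_mul, zero_mul, ite_mul]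
    rw [Finset.sum_sub_distrib]
    rw [Finset.sum_ite_eq' Finset.univ (tail g) ψ, Finset.sum_ite_eq' Finset.univ (head g) ψ]
    simp
  set lo : E → ℝ := fun g => min (ψ (tail g)) (ψ (head g)) with hlodef
  set hi : E → ℝ := fun g => max (ψ (tail g)) (ψ (head g)) with hhidef
  set ℓ : E → ℝ := fun g => hi g - lo g with hℓdef
  have hℓnonneg : ∀ g, 0 ≤ ℓ g := by
    intro g; show (0:ℝ) ≤ hi g - lo g
    exact sub_nonneg.mpr inf_le_sup
  have habs : ∀ g, |f g| = ℓ g := by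
    intro g
    show |f g| = hi g - lo g
    rw [hf g, abs_sub_comm]
    exact (max_sub_min_eq_abs (ψ (tail g)) (ψ (head g))).symm
  have hgoalrw : (Bᵀ * Lp).mulVec χ = f := by
    rw [← Matrix.mulVec_mulVec, ← hψdef, ← hfdef]
  -- level sets and crossing sets
  set SS : ℝ → Finset V := fun t => Finset.univ.filter (fun v => t < ψ v) with hSSdef
  set C : ℝ → Finset E := fun t => Finset.univ.filter (fun g => lo g ≤ t ∧ t < hi g) with hCdef
  have hmemS : ∀ t v, v ∈ SS t ↔ t < ψ v := by
    intro t v; rw [hSSdef]; simp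
  have hmemC : ∀ t g, g ∈ C t ↔ (lo g ≤ t ∧ t < hi g) := by
    intro t g; rw [hCdef]; simp
  -- Part B : current bound
  have hcut : ∀ t : ℝ, ∑ g ∈ C t, ℓ g ≤ 1 := by
    intro t
    have hσ : ∀ g, ∑ v ∈ SS t, B v g
        = (if tail g ∈ SS t then (1:ℝ) else 0) - (if head g ∈ SS t then 1 else 0) := by
      intro g
      rw [Finset.sum_congr rfl (fun v _ => hBsplit v g), Finset.sum_sub_distrib]
      rw [Finset.sum_ite_eq' (SS t) (tail g) (fun _ => (1:ℝ)),
          Finset.sum_ite_eq' (SS t) (head g) (fun _ => (1:ℝ))]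
    have hkey : ∑ v ∈ SS t, χ v = ∑ g, (∑ v ∈ SS t, B v g) * f g := by
      calc ∑ v ∈ SS t, χ v = ∑ v ∈ SS t, (L.mulVec ψ) v := by rw [hLψ]
        _ = ∑ v ∈ SS t, ∑ g, B v g * f g := by
            apply Finset.sum_congr rfl; intro v _
            rw [hL, ← Matrix.mulVec_mulVec, ← hfdef]
            simp [Matrix.mulVec, dotProduct]
        _ = ∑ g, ∑ v ∈ SS t, B v g * f g := Finset.sum_comm
        _ = ∑ g, (∑ v ∈ SS t, B v g) * f g := by
            apply Finset.sum_congr rfl; intro g _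
            rw [Finset.sum_mul]
    have hterm : ∀ g, (∑ v ∈ SS t, B v g) * f g
        = if (lo g ≤ t ∧ t < hi g) then ℓ g else 0 := by
      intro g
      rw [hσ g]
      have hlog : lo g = min (ψ (tail g)) (ψ (head g)) := rfl
      have hhig : hi g = max (ψ (tail g)) (ψ (head g)) := rfl
      have hℓg : ℓ g = hi g - lo g := rfl
      by_cases h1 : t < ψ (tail g) <;> by_cases h2 : t < ψ (head g)
      · have hcond : ¬(lo g ≤ t ∧ t < hi g) := by
          rintro ⟨hl, -⟩
          rw [hlog] at hl
          exact absurd hl (not_le.mpr (lt_min h1 h2))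
        rw [if_pos ((hmemS t (tail g)).mpr h1), if_pos ((hmemS t (head g)).mpr h2),
          if_neg hcond]
        ring
      · have hb' : ψ (head g) ≤ t := le_of_not_gt h2
        have hba : ψ (head g) ≤ ψ (tail g) := le_trans hb' (le_of_lt h1)
        have hcond : lo g ≤ t ∧ t < hi g := by
          constructor
          · rw [hlog]; exact le_trans (min_le_right _ _) hb'
          · rw [hhig]; exact lt_of_lt_of_le h1 (le_max_left _ _)
        have hfg : f g = ℓ g := by
          rw [hf g, hℓg, hhig, hlog, max_eq_left hba, min_eq_right hba]
        have hnotmem : head g ∉ SS t := fun hmem => h2 ((hmemS t (head g)).mp hmem)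
        rw [if_pos ((hmemS t (tail g)).mpr h1), if_neg hnotmem, if_pos hcond, hfg]
        ring
      · have hb' : ψ (tail g) ≤ t := le_of_not_gt h1
        have hba : ψ (tail g) ≤ ψ (head g) := le_trans hb' (le_of_lt h2)
        have hcond : lo g ≤ t ∧ t < hi g := by
          constructor
          · rw [hlog]; exact le_trans (min_le_left _ _) hb'
          · rw [hhig]; exact lt_of_lt_of_le h2 (le_max_right _ _)
        have hfg : f g = -(ℓ g) := by
          rw [hf g, hℓg, hhig, hlog, max_eq_right hba, min_eq_left hba]
          ring
        have hnotmem : tail g ∉ SS t := fun hmem => h1 ((hmemS t (tail g)).mp hmem)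
        rw [if_neg hnotmem, if_pos ((hmemS t (head g)).mpr h2), if_pos hcond, hfg]
        ring
      · have hcond : ¬(lo g ≤ t ∧ t < hi g) := by
          rintro ⟨-, hh⟩
          rw [hhig] at hh
          exact absurd hh (not_lt.mpr (max_le (le_of_not_gt h1) (le_of_not_gt h2)))
        have hnm1 : tail g ∉ SS t := fun hmem => h1 ((hmemS t (tail g)).mp hmem)
        have hnm2 : head g ∉ SS t := fun hmem => h2 ((hmemS t (head g)).mp hmem)
        rw [if_neg hnm1, if_neg hnm2, if_neg hcond]
        ring
    have hχle : ∑ v ∈ SS t, χ v ≤ 1 := by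
      have h1 : ∀ v ∈ SS t, χ v ≤ (if v = tail e then (1:ℝ) else 0) := by
        intro v _
        rw [hχdef]
        by_cases ha : v = tail e
        · simp [ha]
        · by_cases hb : v = head e <;> simp [ha, hb, Ne.symm (hloop e)]
      calc ∑ v ∈ SS t, χ v ≤ ∑ v ∈ SS t, (if v = tail e then (1:ℝ) else 0) :=
            Finset.sum_le_sum h1
        _ = if tail e ∈ SS t then 1 else 0 :=
            Finset.sum_ite_eq' (SS t) (tail e) (fun _ => (1:ℝ))
        _ ≤ 1 := by split <;> norm_num
    calc ∑ g ∈ C t, ℓ g = ∑ g, if (lo g ≤ t ∧ t < hi g) then ℓ g else 0 := by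
          rw [hCdef, Finset.sum_filter]
      _ = ∑ g, (∑ v ∈ SS t, B v g) * f g := by
          exact (Finset.sum_congr rfl (fun g _ => (hterm g))).symm
      _ = ∑ v ∈ SS t, χ v := hkey.symm
      _ ≤ 1 := hχle
  -- Part C : expansion bound
  have hgvol_univ : gvol tail head (Finset.univ : Finset V) = 2*m := by
    rw [gvol]
    have h1 : ∀ g ∈ (Finset.univ : Finset E),
        ((if tail g ∈ (Finset.univ : Finset V) then 1 else 0)
          + (if head g ∈ (Finset.univ : Finset V) then 1 else 0)) = 2 := by
      intro g _; simp
    rw [Finset.sum_congr rfl h1, Finset.sum_const, Finset.card_univ, ← hm, smul_eq_mul]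
    ring
  have hTU : ∀ t : ℝ, gvol tail head (SS t) + gvol tail head (SS t)ᶜ = 2*m := by
    intro t
    rw [gvol, gvol, ← Finset.sum_add_distrib]
    have h1 : ∀ g ∈ (Finset.univ : Finset E),
        (((if tail g ∈ SS t then 1 else 0) + (if head g ∈ SS t then 1 else 0))
          + ((if tail g ∈ (SS t)ᶜ then 1 else 0) + (if head g ∈ (SS t)ᶜ then 1 else 0))) = 2 := by
      intro g _
      by_cases ha : tail g ∈ SS t <;> by_cases hb : head g ∈ SS t <;>
        simp [Finset.mem_compl, ha, hb]
    rw [Finset.sum_congr rfl h1, Finset.sum_const, Finset.card_univ, ← hm, smul_eq_mul]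
    ring
  have hbdry_compl : ∀ t : ℝ, bdry tail head ((SS t)ᶜ) = bdry tail head (SS t) := by
    intro t
    rw [bdry, bdry]
    congr 1
    apply Finset.filter_congr
    intro g _
    rw [Finset.mem_compl, Finset.mem_compl]
    tauto
  have hCbdry : ∀ t : ℝ, (C t).card = bdry tail head (SS t) := by
    intro t
    rw [bdry, hCdef]
    congr 1
    apply Finset.filter_congr
    intro g _
    have hlog : lo g = min (ψ (tail g)) (ψ (head g)) := rfl
    have hhig : hi g = max (ψ (tail g)) (ψ (head g)) := rfl
    constructor
    · rintro ⟨hl, hh⟩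
      rw [hlog] at hl; rw [hhig] at hh
      by_cases h1 : t < ψ (tail g) <;> by_cases h2 : t < ψ (head g)
      · exact absurd hl (not_le.mpr (lt_min h1 h2))
      · exact Or.inl ⟨(hmemS t (tail g)).mpr h1, fun hmem => h2 ((hmemS t (head g)).mp hmem)⟩
      · exact Or.inr ⟨fun hmem => h1 ((hmemS t (tail g)).mp hmem), (hmemS t (head g)).mpr h2⟩
      · exact absurd hh (not_lt.mpr (max_le (le_of_not_gt h1) (le_of_not_gt h2)))
    · rintro (⟨hin, hout⟩ | ⟨hout, hin⟩)
      · have h1 : t < ψ (tail g) := (hmemS t (tail g)).mp hin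
        have h2 : ψ (head g) ≤ t := le_of_not_gt (fun hc => hout ((hmemS t (head g)).mpr hc))
        constructor
        · rw [hlog]; exact le_trans (min_le_right _ _) h2
        · rw [hhig]; exact lt_of_lt_of_le h1 (le_max_left _ _)
      · have h1 : t < ψ (head g) := (hmemS t (head g)).mp hin
        have h2 : ψ (tail g) ≤ t := le_of_not_gt (fun hc => hout ((hmemS t (tail g)).mpr hc))
        constructor
        · rw [hlog]; exact le_trans (min_le_left _ _) h2
        · rw [hhig]; exact lt_of_lt_of_le h1 (le_max_right _ _)
  have hexp' : ∀ t : ℝ,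
      Φ * min ((gvol tail head (SS t) : ℝ)) ((gvol tail head ((SS t)ᶜ) : ℝ))
        ≤ ((C t).card : ℝ) := by
    intro t
    have htu := hTU t
    by_cases hc : (gvol tail head (SS t) : ℝ) ≤ (gvol tail head (Finset.univ : Finset V) : ℝ)/2
    · have hb := hexp (SS t) hc
      rw [hCbdry t]
      calc Φ * min ((gvol tail head (SS t) : ℝ)) ((gvol tail head ((SS t)ᶜ) : ℝ))
          ≤ Φ * (gvol tail head (SS t) : ℝ) :=
            mul_le_mul_of_nonneg_left (min_le_left _ _) (le_of_lt hΦ)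
        _ ≤ (bdry tail head (SS t) : ℝ) := hb
    · have hcompl : (gvol tail head ((SS t)ᶜ) : ℝ)
          ≤ (gvol tail head (Finset.univ : Finset V) : ℝ)/2 := by
        rw [hgvol_univ] at hc ⊢
        push_cast at hc ⊢
        have : (gvol tail head (SS t) : ℝ) + (gvol tail head ((SS t)ᶜ) : ℝ) = 2*m := by
          exact_mod_cast congrArg (Nat.cast : ℕ → ℝ) htu
        linarith
      have hb := hexp ((SS t)ᶜ) hcompl
      rw [hCbdry t, ← hbdry_compl t]
      calc Φ * min ((gvol tail head (SS t) : ℝ)) ((gvol tail head ((SS t)ᶜ) : ℝ))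
          ≤ Φ * (gvol tail head ((SS t)ᶜ) : ℝ) :=
            mul_le_mul_of_nonneg_left (min_le_right _ _) (le_of_lt hΦ)
        _ ≤ (bdry tail head ((SS t)ᶜ) : ℝ) := hb
  -- token counts
  set Rk : E → ℕ := fun g => ∑ g', ((if hi g ≤ ψ (tail g') then 1 else 0)
      + (if hi g ≤ ψ (head g') then 1 else 0)) with hRkdef
  set Sk : E → ℕ := fun g => ∑ g', ((if ψ (tail g') ≤ lo g then 1 else 0)
      + (if ψ (head g') ≤ lo g then 1 else 0)) with hSkdef
  have hRk1 : ∀ g, 1 ≤ Rk g := by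
    intro g
    have hhig : hi g = max (ψ (tail g)) (ψ (head g)) := rfl
    have hself : 1 ≤ (if hi g ≤ ψ (tail g) then 1 else 0)
        + (if hi g ≤ ψ (head g) then 1 else 0) := by
      rcases max_choice (ψ (tail g)) (ψ (head g)) with h | h
      · rw [if_pos (le_of_eq (hhig.trans h))]; omega
      · rw [if_pos (le_of_eq (hhig.trans h))]; omega
    calc 1 ≤ _ := hself
      _ ≤ Rk g := Finset.single_le_sum (f := fun g' => (if hi g ≤ ψ (tail g') then 1 else 0)
          + (if hi g ≤ ψ (head g') then 1 else 0)) (fun i _ => Nat.zero_le _) (Finset.mem_univ g)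
  have hSk1 : ∀ g, 1 ≤ Sk g := by
    intro g
    have hlog : lo g = min (ψ (tail g)) (ψ (head g)) := rfl
    have hself : 1 ≤ (if ψ (tail g) ≤ lo g then 1 else 0)
        + (if ψ (head g) ≤ lo g then 1 else 0) := by
      rcases min_choice (ψ (tail g)) (ψ (head g)) with h | h
      · rw [if_pos (ge_of_eq (hlog.trans h))]; omega
      · have : (if ψ (head g) ≤ lo g then 1 else 0) = 1 := if_pos (ge_of_eq (hlog.trans h))
        omega
    calc 1 ≤ _ := hself
      _ ≤ Sk g := Finset.single_le_sum (f := fun g' => (if ψ (tail g') ≤ lo g then 1 else 0)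
          + (if ψ (head g') ≤ lo g then 1 else 0)) (fun i _ => Nat.zero_le _) (Finset.mem_univ g)
  have hRkT : ∀ (t : ℝ) (g : E), g ∈ C t → Rk g ≤ gvol tail head (SS t) := by
    intro t g hg
    have hthi : t < hi g := ((hmemC t g).mp hg).2
    rw [gvol, hRkdef]
    apply Finset.sum_le_sum
    intro g' _
    have m1 : (if hi g ≤ ψ (tail g') then 1 else 0) ≤ (if tail g' ∈ SS t then 1 else 0) := by
      by_cases h : hi g ≤ ψ (tail g')
      · rw [if_pos h, if_pos ((hmemS t (tail g')).mpr (lt_of_lt_of_le hthi h))]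
      · rw [if_neg h]; omega
    have m2 : (if hi g ≤ ψ (head g') then 1 else 0) ≤ (if head g' ∈ SS t then 1 else 0) := by
      by_cases h : hi g ≤ ψ (head g')
      · rw [if_pos h, if_pos ((hmemS t (head g')).mpr (lt_of_lt_of_le hthi h))]
      · rw [if_neg h]; omega
    omega
  have hSkU : ∀ (t : ℝ) (g : E), g ∈ C t → Sk g ≤ gvol tail head ((SS t)ᶜ) := by
    intro t g hg
    have hlot : lo g ≤ t := ((hmemC t g).mp hg).1
    rw [gvol, hSkdef]
    apply Finset.sum_le_sum
    intro g' _
    have m1 : (if ψ (tail g') ≤ lo g then 1 else 0) ≤ (if tail g' ∈ (SS t)ᶜ then 1 else 0) := by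
      by_cases h : ψ (tail g') ≤ lo g
      · rw [if_pos h, if_pos (Finset.mem_compl.mpr
          (fun hmem => absurd ((hmemS t (tail g')).mp hmem) (not_lt.mpr (le_trans h hlot))))]
      · rw [if_neg h]; omega
    have m2 : (if ψ (head g') ≤ lo g then 1 else 0) ≤ (if head g' ∈ (SS t)ᶜ then 1 else 0) := by
      by_cases h : ψ (head g') ≤ lo g
      · rw [if_pos h, if_pos (Finset.mem_compl.mpr
          (fun hmem => absurd ((hmemS t (head g')).mp hmem) (not_lt.mpr (le_trans h hlot))))]
      · rw [if_neg h]; omega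
    omega
  -- rank bounds
  have hρR : ∀ g, (Finset.univ.filter fun g' => hi g ≤ hi g').card ≤ Rk g := by
    intro g
    rw [Finset.card_filter, hRkdef]
    apply Finset.sum_le_sum
    intro g' _
    by_cases h : hi g ≤ hi g'
    · have hhig' : hi g' = max (ψ (tail g')) (ψ (head g')) := rfl
      rcases max_choice (ψ (tail g')) (ψ (head g')) with hc | hc
      · have h1 : hi g ≤ ψ (tail g') := le_trans h (le_of_eq (hhig'.trans hc))
        rw [if_pos h, if_pos h1]; omega
      · have h1 : hi g ≤ ψ (head g') := le_trans h (le_of_eq (hhig'.trans hc))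
        rw [if_pos h, if_pos h1]; omega
    · rw [if_neg h]; omega
  have hρS : ∀ g, (Finset.univ.filter fun g' => lo g' ≤ lo g).card ≤ Sk g := by
    intro g
    rw [Finset.card_filter, hSkdef]
    apply Finset.sum_le_sum
    intro g' _
    by_cases h : lo g' ≤ lo g
    · have hlog' : lo g' = min (ψ (tail g')) (ψ (head g')) := rfl
      rcases min_choice (ψ (tail g')) (ψ (head g')) with hc | hc
      · have h1 : ψ (tail g') ≤ lo g := le_trans (le_of_eq (hc.symm.trans hlog'.symm)) h
        rw [if_pos h, if_pos h1]; omega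
      · have h1 : ψ (head g') ≤ lo g := le_trans (le_of_eq (hc.symm.trans hlog'.symm)) h
        rw [if_pos h, if_pos h1]; omega
    · rw [if_neg h]; omega
  have hcardE : (Finset.univ : Finset E).card = m := by rw [Finset.card_univ, hm]
  have hrank_hi : ∑ g, (1:ℝ)/((Finset.univ.filter fun g' => hi g ≤ hi g').card)
      ≤ ∑ j ∈ Finset.range m, (1:ℝ)/(j+1) := by
    have h := sum_inv_rank_le (fun g => -(hi g)) (Finset.univ : Finset E)
    rw [hcardE] at h
    have hsets : ∀ x : E, ((Finset.univ : Finset E).filter fun y => -(hi y) ≤ -(hi x))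
        = ((Finset.univ : Finset E).filter fun g' => hi x ≤ hi g') := by
      intro x
      apply Finset.filter_congr
      intro y _
      constructor <;> intro hy <;> linarith
    calc ∑ g, (1:ℝ)/((Finset.univ.filter fun g' => hi g ≤ hi g').card)
        = ∑ g, (1:ℝ)/(((Finset.univ : Finset E).filter fun y => -(hi y) ≤ -(hi g)).card) := by
          apply Finset.sum_congr rfl; intro x _; rw [hsets x]
      _ ≤ ∑ j ∈ Finset.range m, (1:ℝ)/(j+1) := h
  have hrank_lo : ∑ g, (1:ℝ)/((Finset.univ.filter fun g' => lo g' ≤ lo g).card)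
      ≤ ∑ j ∈ Finset.range m, (1:ℝ)/(j+1) := by
    have h := sum_inv_rank_le lo (Finset.univ : Finset E)
    rw [hcardE] at h
    exact h
  -- sorted values
  set VALS : Finset ℝ := Finset.univ.image ψ with hVALSdef
  have hloV : ∀ g, lo g ∈ VALS := by
    intro g
    have hlog : lo g = min (ψ (tail g)) (ψ (head g)) := rfl
    rcases min_choice (ψ (tail g)) (ψ (head g)) with h | h
    · rw [hVALSdef]
      have : lo g = ψ (tail g) := hlog.trans h
      rw [this]
      exact Finset.mem_image_of_mem ψ (Finset.mem_univ _)
    · rw [hVALSdef]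
      have : lo g = ψ (head g) := hlog.trans h
      rw [this]
      exact Finset.mem_image_of_mem ψ (Finset.mem_univ _)
  have hhiV : ∀ g, hi g ∈ VALS := by
    intro g
    have hhig : hi g = max (ψ (tail g)) (ψ (head g)) := rfl
    rcases max_choice (ψ (tail g)) (ψ (head g)) with h | h
    · rw [hVALSdef]
      have : hi g = ψ (tail g) := hhig.trans h
      rw [this]
      exact Finset.mem_image_of_mem ψ (Finset.mem_univ _)
    · rw [hVALSdef]
      have : hi g = ψ (head g) := hhig.trans h
      rw [this]
      exact Finset.mem_image_of_mem ψ (Finset.mem_univ _)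
  have htel : ∀ g, ∑ u ∈ VALS.filter (fun u => lo g ≤ u ∧ u < hi g), (nxt VALS u - u) = ℓ g := by
    intro g
    show _ = hi g - lo g
    exact telescope_gaps VALS (VALS.filter (fun u => lo g ≤ u ∧ u < hi g)).card
      (lo g) (hi g) (hloV g) (hhiV g) inf_le_sup rfl
  -- mass decomposition
  have hmass : ∑ g, ℓ g = ∑ u ∈ VALS, ((C u).card : ℝ) * (nxt VALS u - u) := by
    calc ∑ g, ℓ g
        = ∑ g, ∑ u ∈ VALS.filter (fun u => lo g ≤ u ∧ u < hi g), (nxt VALS u - u) :=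
          (Finset.sum_congr rfl (fun g _ => (htel g))).symm
      _ = ∑ g, ∑ u ∈ VALS, if lo g ≤ u ∧ u < hi g then (nxt VALS u - u) else 0 := by
          apply Finset.sum_congr rfl; intro g _; rw [Finset.sum_filter]
      _ = ∑ u ∈ VALS, ∑ g, if lo g ≤ u ∧ u < hi g then (nxt VALS u - u) else 0 :=
          Finset.sum_comm
      _ = ∑ u ∈ VALS, ((C u).card : ℝ) * (nxt VALS u - u) := by
          apply Finset.sum_congr rfl; intro u _
          have h1 : ∑ g, (if lo g ≤ u ∧ u < hi g then (nxt VALS u - u) else 0)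
              = ∑ g ∈ C u, (nxt VALS u - u) := by
            rw [hCdef]; exact (Finset.sum_filter _ _).symm
          rw [h1, Finset.sum_const, nsmul_eq_mul]
  set mrs : E → ℝ := fun g => min ((Rk g : ℝ)) ((Sk g : ℝ)) with hmrsdef
  have hmrs_pos : ∀ g, 0 < mrs g := by
    intro g
    exact lt_min (by exact_mod_cast hRk1 g) (by exact_mod_cast hSk1 g)
  -- per piece bound
  have hpiece : ∀ u ∈ VALS, Φ * (((C u).card : ℝ) * (nxt VALS u - u))
      ≤ ∑ g ∈ C u, (nxt VALS u - u) / (ℓ g * mrs g) := by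
    intro u _
    rcases Finset.eq_empty_or_nonempty (C u) with hemp | hne
    · rw [hemp]; simp
    · obtain ⟨g₀, hg₀⟩ := hne
      have hg₀' := (hmemC u g₀).mp hg₀
      have hwpos : 0 < nxt VALS u - u :=
        sub_pos.mpr (nxt_lt VALS u ⟨hi g₀, hhiV g₀, hg₀'.2⟩)
      have hℓw : ∀ g ∈ C u, nxt VALS u - u ≤ ℓ g := by
        intro g hg
        have hg' := (hmemC u g).mp hg
        have h1 : nxt VALS u ≤ hi g := nxt_le VALS u (hhiV g) hg'.2
        exact sub_le_sub h1 hg'.1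
      have hℓpos : ∀ g ∈ C u, 0 < ℓ g := fun g hg => lt_of_lt_of_le hwpos (hℓw g hg)
      have hCS : (((C u).card : ℝ))^2 ≤ (∑ g ∈ C u, ℓ g) * (∑ g ∈ C u, 1/(ℓ g)) := by
        have h := Finset.sum_sq_le_sum_mul_sum_of_sq_eq_mul (C u)
          (r := fun _ => (1:ℝ)) (f := ℓ) (g := fun g' => 1/(ℓ g'))
          (fun i _ => hℓnonneg i)
          (fun i hi2 => le_of_lt (one_div_pos.mpr (hℓpos i hi2)))
          (fun i hi2 => by
            rw [one_pow, mul_one_div, div_self (ne_of_gt (hℓpos i hi2))])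
        simpa using h
      have hQ0 : (0:ℝ) ≤ ∑ g ∈ C u, 1/(ℓ g) := by
        apply Finset.sum_nonneg
        intro g hg
        exact le_of_lt (one_div_pos.mpr (hℓpos g hg))
      have hQ : (((C u).card : ℝ))^2 ≤ ∑ g ∈ C u, 1/(ℓ g) := by
        calc (((C u).card : ℝ))^2 ≤ (∑ g ∈ C u, ℓ g) * (∑ g ∈ C u, 1/(ℓ g)) := hCS
          _ ≤ 1 * (∑ g ∈ C u, 1/(ℓ g)) := mul_le_mul_of_nonneg_right (hcut u) hQ0
          _ = ∑ g ∈ C u, 1/(ℓ g) := one_mul _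
      set M : ℝ := min ((gvol tail head (SS u) : ℝ)) ((gvol tail head ((SS u)ᶜ) : ℝ)) with hMdef
      have hmrsM : ∀ g ∈ C u, mrs g ≤ M := by
        intro g hg
        apply min_le_min
        · exact_mod_cast hRkT u g hg
        · exact_mod_cast hSkU u g hg
      have hMpos : 0 < M := lt_of_lt_of_le (hmrs_pos g₀) (hmrsM g₀ hg₀)
      have hterm2 : ∀ g ∈ C u, 1/(ℓ g) ≤ M * (1/(ℓ g * mrs g)) := by
        intro g hg
        have h1 : 0 < ℓ g := hℓpos g hg
        have h2 : 0 < mrs g := hmrs_pos g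
        have h1' : ℓ g ≠ 0 := ne_of_gt h1
        have h2' : mrs g ≠ 0 := ne_of_gt h2
        have heq : 1/(ℓ g) = mrs g * (1/(ℓ g * mrs g)) := by
          field_simp
        rw [heq]
        exact mul_le_mul_of_nonneg_right (hmrsM g hg) (by positivity)
      have hsumterm : ∑ g ∈ C u, 1/(ℓ g) ≤ M * ∑ g ∈ C u, 1/(ℓ g * mrs g) := by
        rw [Finset.mul_sum]
        exact Finset.sum_le_sum hterm2
      have hkey2 : Φ * ((C u).card : ℝ) ≤ ∑ g ∈ C u, 1/(ℓ g * mrs g) := by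
        have hcard0 : (0:ℝ) ≤ ((C u).card : ℝ) := Nat.cast_nonneg _
        have h1 : (Φ * M) * ((C u).card : ℝ) ≤ ((C u).card : ℝ) * ((C u).card : ℝ) := by
          apply mul_le_mul_of_nonneg_right (hexp' u) hcard0
        have h2 : ((C u).card : ℝ) * ((C u).card : ℝ) ≤ M * ∑ g ∈ C u, 1/(ℓ g * mrs g) := by
          calc ((C u).card : ℝ) * ((C u).card : ℝ) = (((C u).card : ℝ))^2 := (sq _).symm
            _ ≤ ∑ g ∈ C u, 1/(ℓ g) := hQ
            _ ≤ M * ∑ g ∈ C u, 1/(ℓ g * mrs g) := hsumterm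
        have h3 : M * (Φ * ((C u).card : ℝ)) ≤ M * ∑ g ∈ C u, 1/(ℓ g * mrs g) := by
          calc M * (Φ * ((C u).card : ℝ)) = (Φ * M) * ((C u).card : ℝ) := by ring
            _ ≤ ((C u).card : ℝ) * ((C u).card : ℝ) := h1
            _ ≤ M * ∑ g ∈ C u, 1/(ℓ g * mrs g) := h2
        exact le_of_mul_le_mul_left h3 hMpos
      calc Φ * (((C u).card : ℝ) * (nxt VALS u - u))
          = (Φ * ((C u).card : ℝ)) * (nxt VALS u - u) := by ring
        _ ≤ (∑ g ∈ C u, 1/(ℓ g * mrs g)) * (nxt VALS u - u) :=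
            mul_le_mul_of_nonneg_right hkey2 (le_of_lt hwpos)
        _ = ∑ g ∈ C u, (nxt VALS u - u) / (ℓ g * mrs g) := by
            rw [Finset.sum_mul]
            apply Finset.sum_congr rfl; intro g _
            rw [one_div, div_eq_mul_inv, mul_comm]
  -- swap back
  have hswap : ∑ u ∈ VALS, ∑ g ∈ C u, (nxt VALS u - u) / (ℓ g * mrs g)
      ≤ ∑ g, 1/(mrs g) := by
    have h1 : ∑ u ∈ VALS, ∑ g ∈ C u, (nxt VALS u - u) / (ℓ g * mrs g)
        = ∑ g, (∑ u ∈ VALS.filter (fun u => lo g ≤ u ∧ u < hi g), (nxt VALS u - u))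
            * (1/(ℓ g * mrs g)) := by
      calc ∑ u ∈ VALS, ∑ g ∈ C u, (nxt VALS u - u) / (ℓ g * mrs g)
          = ∑ u ∈ VALS, ∑ g, if lo g ≤ u ∧ u < hi g
              then (nxt VALS u - u) / (ℓ g * mrs g) else 0 := by
            apply Finset.sum_congr rfl; intro u _
            rw [hCdef]; exact Finset.sum_filter _ _
        _ = ∑ g, ∑ u ∈ VALS, if lo g ≤ u ∧ u < hi g
              then (nxt VALS u - u) / (ℓ g * mrs g) else 0 := Finset.sum_comm
        _ = ∑ g, (∑ u ∈ VALS.filter (fun u => lo g ≤ u ∧ u < hi g), (nxt VALS u - u))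
              * (1/(ℓ g * mrs g)) := by
            apply Finset.sum_congr rfl; intro g _
            rw [← Finset.sum_filter, Finset.sum_mul]
            apply Finset.sum_congr rfl; intro u _
            rw [one_div, div_eq_mul_inv]
    rw [h1]
    apply Finset.sum_le_sum
    intro g _
    rw [htel g]
    by_cases hz : ℓ g = 0
    · rw [hz]
      have hzz : (0:ℝ) * (1/((0:ℝ) * mrs g)) = 0 := by ring
      rw [hzz]
      exact le_of_lt (one_div_pos.mpr (hmrs_pos g))
    · have hℓposg : 0 < ℓ g := lt_of_le_of_ne (hℓnonneg g) (Ne.symm hz)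
      have hz1 : ℓ g ≠ 0 := ne_of_gt hℓposg
      have hz2 : mrs g ≠ 0 := ne_of_gt (hmrs_pos g)
      have hzz : ℓ g * (1/(ℓ g * mrs g)) = 1/(mrs g) := by
        field_simp
      rw [hzz]
  -- reciprocal min split
  have hmrs_split : ∀ g, 1/(mrs g) ≤ 1/((Rk g : ℝ)) + 1/((Sk g : ℝ)) := by
    intro g
    have hR : (0:ℝ) < (Rk g : ℝ) := by exact_mod_cast hRk1 g
    have hS : (0:ℝ) < (Sk g : ℝ) := by exact_mod_cast hSk1 g
    rcases min_choice ((Rk g : ℝ)) ((Sk g : ℝ)) with h | h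
    · rw [hmrsdef]
      simp only
      rw [h]
      have : (0:ℝ) ≤ 1/((Sk g : ℝ)) := by positivity
      linarith
    · rw [hmrsdef]
      simp only
      rw [h]
      have : (0:ℝ) ≤ 1/((Rk g : ℝ)) := by positivity
      linarith
  have hinvR : ∀ g, 1/((Rk g : ℝ))
      ≤ 1/(((Finset.univ.filter fun g' => hi g ≤ hi g').card : ℝ)) := by
    intro g
    have hpos : 0 < (Finset.univ.filter fun g' => hi g ≤ hi g').card := by
      apply Finset.card_pos.mpr
      exact ⟨g, Finset.mem_filter.mpr ⟨Finset.mem_univ g, le_refl _⟩⟩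
    apply one_div_le_one_div_of_le
    · exact_mod_cast hpos
    · exact_mod_cast hρR g
  have hinvS : ∀ g, 1/((Sk g : ℝ))
      ≤ 1/(((Finset.univ.filter fun g' => lo g' ≤ lo g).card : ℝ)) := by
    intro g
    have hpos : 0 < (Finset.univ.filter fun g' => lo g' ≤ lo g).card := by
      apply Finset.card_pos.mpr
      exact ⟨g, Finset.mem_filter.mpr ⟨Finset.mem_univ g, le_refl _⟩⟩
    apply one_div_le_one_div_of_le
    · exact_mod_cast hpos
    · exact_mod_cast hρS g
  -- harmonic bound
  have hharm : ∑ j ∈ Finset.range m, (1:ℝ)/(j+1) ≤ 1 + Real.log m := harm_le m hm1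
  have hsum_mrs : ∑ g, 1/(mrs g) ≤ 2*(1 + Real.log m) := by
    calc ∑ g, 1/(mrs g) ≤ ∑ g, (1/((Rk g : ℝ)) + 1/((Sk g : ℝ))) :=
          Finset.sum_le_sum (fun g _ => hmrs_split g)
      _ = (∑ g, 1/((Rk g : ℝ))) + (∑ g, 1/((Sk g : ℝ))) := Finset.sum_add_distrib
      _ ≤ (∑ g, (1:ℝ)/(((Finset.univ.filter fun g' => hi g ≤ hi g').card : ℝ)))
          + (∑ g, (1:ℝ)/(((Finset.univ.filter fun g' => lo g' ≤ lo g).card : ℝ))) := by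
          apply add_le_add
          · exact Finset.sum_le_sum (fun g _ => hinvR g)
          · exact Finset.sum_le_sum (fun g _ => hinvS g)
      _ ≤ (∑ j ∈ Finset.range m, (1:ℝ)/(j+1)) + (∑ j ∈ Finset.range m, (1:ℝ)/(j+1)) :=
          add_le_add hrank_hi hrank_lo
      _ ≤ (1 + Real.log m) + (1 + Real.log m) := add_le_add hharm hharm
      _ = 2*(1 + Real.log m) := by ring
  -- put everything together
  have hΦmass : Φ * (∑ g, ℓ g) ≤ 2*(1 + Real.log m) := by
    calc Φ * (∑ g, ℓ g)
        = ∑ u ∈ VALS, Φ * (((C u).card : ℝ) * (nxt VALS u - u)) := by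
          rw [hmass, Finset.mul_sum]
      _ ≤ ∑ u ∈ VALS, ∑ g ∈ C u, (nxt VALS u - u) / (ℓ g * mrs g) :=
          Finset.sum_le_sum hpiece
      _ ≤ ∑ g, 1/(mrs g) := hswap
      _ ≤ 2*(1 + Real.log m) := hsum_mrs
  have hm0 : (0:ℝ) < m := by exact_mod_cast hm1
  have hnum : 2*(1 + Real.log m) ≤ 3 * Real.log (2*m) := by
    rw [Real.log_mul (by norm_num) (ne_of_gt hm0)]
    have h2 : (0.6931471803 : ℝ) < Real.log 2 := Real.log_two_gt_d9
    have h3 : 0 ≤ Real.log m := Real.log_nonneg (by exact_mod_cast hm1)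
    linarith
  have hgoal2 : ∑ g, |((Bᵀ * Lp).mulVec χ) g| = ∑ g, ℓ g := by
    apply Finset.sum_congr rfl; intro g _
    rw [hgoalrw]
    exact habs g
  rw [hgoal2, le_div_iff₀ hΦ]
  calc (∑ g, ℓ g) * Φ = Φ * (∑ g, ℓ g) := mul_comm _ _
    _ ≤ 2*(1 + Real.log m) := hΦmass
    _ ≤ 3 * Real.log (2*m) := hnum




end
end

section
/- For any p ∈ [1,∞] and q given by 1/p + 1/q = 1, the ℓp and ℓq multi-commodity competitive ratios of the electrical flow routing on an unweighted multigraph are equal: ρ_p(A_ℰ) = ρ_q(A_ℰ). -/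
noncomputable section
open Matrix ENNReal

variable {V E : Type*} [Fintype V] [Fintype E] [DecidableEq V]

/-- The congestion (in the ℓp sense) incurred by the multiset of flows `f`. -/
def cong {E : Type*} [Fintype E] (p : ℝ≥0∞) {k : ℕ} (f : Fin k → E → ℝ) : ℝ :=
  lpNormE p (fun e => ∑ i, |f i e|)

/-- The optimal ℓp congestion for routing the multiset of demands `χ`. -/
def opt {V E : Type*} [Fintype V] [Fintype E] (p : ℝ≥0∞) (B : Matrix V E ℝ)
    {k : ℕ} (χ : Fin k → V → ℝ) : ℝ :=
  sInf {c | ∃ f : Fin k → E → ℝ, (∀ i, B.mulVec (f i) = χ i) ∧ c = cong p f}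

/-- The multi-commodity ℓp competitive ratio of the oblivious routing `A`. -/
def compRatio {V E : Type*} [Fintype V] [Fintype E] (p : ℝ≥0∞)
    (B : Matrix V E ℝ) (A : Matrix E V ℝ) : ℝ :=
  sSup {r | ∃ (k : ℕ) (χ : Fin k → V → ℝ), (∀ i, ∑ v, χ i v = 0) ∧
    r = cong p (fun i => A.mulVec (χ i)) / opt p B χ}


/-! ### Auxiliary lemmas about `lpNormE` -/

section LpAux
open scoped NNReal
set_option linter.unusedSectionVars false

variable {n : Type*} [Fintype n] {p q : ℝ≥0∞}

lemma one_le_toReal_of (hp : 1 ≤ p) (hp' : p ≠ ⊤) : 1 ≤ p.toReal := by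
  rw [← ENNReal.toReal_one]
  exact ENNReal.toReal_mono hp' hp

lemma lpNormE_nonneg (x : n → ℝ) : 0 ≤ lpNormE p x := by
  unfold lpNormE
  split
  · exact Real.iSup_nonneg fun i => abs_nonneg _
  · exact Real.rpow_nonneg
      (Finset.sum_nonneg fun i _ => Real.rpow_nonneg (abs_nonneg _) _) _

lemma lpNormE_zero (hp : 1 ≤ p) : lpNormE p (0 : n → ℝ) = 0 := by
  unfold lpNormE
  split
  next h =>
    rcases isEmpty_or_nonempty n with hn | hn
    · exact Real.iSup_of_isEmpty _
    · simp only [Pi.zero_apply, abs_zero]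
      exact ciSup_const (ι := n) (a := (0:ℝ))
  next h =>
    have ht : p.toReal ≠ 0 := by
      have := one_le_toReal_of hp h
      linarith
    simp only [Pi.zero_apply, abs_zero, Real.zero_rpow ht, Finset.sum_const_zero]
    exact Real.zero_rpow (by simp [ht])

lemma abs_le_lpNormE (hp : 1 ≤ p) (x : n → ℝ) (i : n) : |x i| ≤ lpNormE p x := by
  unfold lpNormE
  split
  next h =>
    exact le_ciSup (f := fun j => |x j|) (Set.Finite.bddAbove (Set.finite_range _)) i
  next h =>
    have ht : (1:ℝ) ≤ p.toReal := one_le_toReal_of hp h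
    have ht0 : p.toReal ≠ 0 := by linarith
    have hxi : |x i| = (|x i| ^ p.toReal) ^ (1 / p.toReal) := by
      rw [← Real.rpow_mul (abs_nonneg _), mul_one_div_cancel ht0, Real.rpow_one]
    rw [hxi]
    refine Real.rpow_le_rpow (Real.rpow_nonneg (abs_nonneg _) _) ?_ (by positivity)
    exact Finset.single_le_sum (fun j _ => Real.rpow_nonneg (abs_nonneg _) _)
      (Finset.mem_univ i)

lemma lpNormE_mono (hp : 1 ≤ p) {x y : n → ℝ} (h : ∀ i, |x i| ≤ |y i|) :
    lpNormE p x ≤ lpNormE p y := by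
  unfold lpNormE
  split
  next hT =>
    rcases isEmpty_or_nonempty n with hn | hn
    · simp
    · exact ciSup_mono (Set.Finite.bddAbove (Set.finite_range _)) h
  next hT =>
    refine Real.rpow_le_rpow
      (Finset.sum_nonneg fun i _ => Real.rpow_nonneg (abs_nonneg _) _)
      (Finset.sum_le_sum fun i _ =>
        Real.rpow_le_rpow (abs_nonneg _) (h i) (by
          have := one_le_toReal_of hp hT; linarith)) (by positivity)

lemma lpNormE_abs (x : n → ℝ) : lpNormE p (fun i => |x i|) = lpNormE p x := by
  unfold lpNormE
  simp [abs_abs]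

lemma lpNormE_pos (hp : 1 ≤ p) {x : n → ℝ} (hx : x ≠ 0) : 0 < lpNormE p x := by
  obtain ⟨i, hi⟩ := Function.ne_iff.1 hx
  calc (0:ℝ) < |x i| := abs_pos.2 hi
  _ ≤ lpNormE p x := abs_le_lpNormE hp x i

lemma rpow_two_term {x y t : ℝ} (hx : 0 ≤ x) (hy : 0 ≤ y) (ht : 1 ≤ t) :
    x ^ t + y ^ t ≤ (x + y) ^ t := by
  lift x to ℝ≥0 using hx
  lift y to ℝ≥0 using hy
  have ht0 : t ≠ 0 := by linarith
  have h2 := NNReal.rpow_add_rpow_le_add x y ht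
  have h3 := NNReal.rpow_le_rpow h2 (by linarith : (0:ℝ) ≤ t)
  rw [← NNReal.rpow_mul, one_div, inv_mul_cancel₀ ht0, NNReal.rpow_one] at h3
  have h4 := NNReal.coe_le_coe.2 h3
  push_cast at h4 ⊢
  exact h4

/-- Superadditivity of `t`-th powers: `∑ aᵢᵗ ≤ (∑ aᵢ)ᵗ` for `t ≥ 1`. -/
lemma sum_rpow_le_rpow_sum {t : ℝ} (ht : 1 ≤ t) (s : Finset n) (f : n → ℝ)
    (hf : ∀ i, 0 ≤ f i) : ∑ i ∈ s, f i ^ t ≤ (∑ i ∈ s, f i) ^ t := by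
  classical
  induction s using Finset.induction with
  | empty => simp [Real.zero_rpow (by linarith : t ≠ 0)]
  | insert a s hnot ih =>
    rw [Finset.sum_insert hnot, Finset.sum_insert hnot]
    calc f a ^ t + ∑ i ∈ s, f i ^ t ≤ f a ^ t + (∑ i ∈ s, f i) ^ t := by linarith [ih]
    _ ≤ _ := rpow_two_term (hf a) (Finset.sum_nonneg fun i _ => hf i) ht

lemma lpNormE_le_sum_abs (hp : 1 ≤ p) (x : n → ℝ) :
    lpNormE p x ≤ ∑ i, |x i| := by
  unfold lpNormE
  split
  next hT =>
    rcases isEmpty_or_nonempty n with hn | hn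
    · simp
    · exact ciSup_le fun i => Finset.single_le_sum (f := fun j => |x j|)
        (fun j _ => abs_nonneg _) (Finset.mem_univ i)
  next hT =>
    have ht : (1:ℝ) ≤ p.toReal := one_le_toReal_of hp hT
    have ht0 : p.toReal ≠ 0 := by linarith
    have h1 : (∑ i, |x i| ^ p.toReal) ≤ (∑ i, |x i|) ^ p.toReal :=
      sum_rpow_le_rpow_sum ht _ _ fun i => abs_nonneg _
    calc (∑ i, |x i| ^ p.toReal) ^ (1/p.toReal)
        ≤ ((∑ i, |x i|) ^ p.toReal) ^ (1/p.toReal) :=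
          Real.rpow_le_rpow (Finset.sum_nonneg fun i _ =>
            Real.rpow_nonneg (abs_nonneg _) _) h1 (by positivity)
      _ = ∑ i, |x i| := by
          rw [← Real.rpow_mul (Finset.sum_nonneg fun i _ => abs_nonneg _),
            mul_one_div_cancel ht0, Real.rpow_one]

end LpAux

/-! ### Operator norms and duality -/

section OpAux
open scoped NNReal
set_option linter.unusedSectionVars false

variable {m n : Type*} [Fintype m] [Fintype n] {p q : ℝ≥0∞}

lemma lpNormE_one_eq (y : n → ℝ) : lpNormE 1 y = ∑ i, |y i| := by
  unfold lpNormE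
  rw [if_neg (by simp : (1:ℝ≥0∞) ≠ ⊤)]
  simp [Real.rpow_one]

lemma conj_cases (hp : 1 ≤ p) (hq : 1 ≤ q) (hpq : 1/p + 1/q = 1) :
    (p = ⊤ ∧ q = 1) ∨ (q = ⊤ ∧ p = 1) ∨
      (p ≠ ⊤ ∧ q ≠ ⊤ ∧ Real.HolderConjugate p.toReal q.toReal) := by
  simp only [one_div] at hpq
  have hp0 : p ≠ 0 := fun h => by simp [h] at hp
  have hq0 : q ≠ 0 := fun h => by simp [h] at hq
  by_cases hpT : p = ⊤
  · left
    refine ⟨hpT, ?_⟩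
    rw [hpT] at hpq
    simp only [ENNReal.inv_top, zero_add] at hpq
    exact ENNReal.inv_eq_one.1 hpq
  by_cases hqT : q = ⊤
  · right; left
    refine ⟨hqT, ?_⟩
    rw [hqT] at hpq
    simp only [ENNReal.inv_top, add_zero] at hpq
    exact ENNReal.inv_eq_one.1 hpq
  right; right
  refine ⟨hpT, hqT, Real.holderConjugate_iff.2 ⟨?_, ?_⟩⟩
  · have hp1 : p ≠ 1 := by
      rintro rfl
      simp only [inv_one] at hpq
      have : q⁻¹ = 0 := by
        calc q⁻¹ = 1 + q⁻¹ - 1 := by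
              rw [ENNReal.add_sub_cancel_left (by simp)]
        _ = 1 - 1 := by rw [hpq]
        _ = 0 := by simp
      exact hqT (ENNReal.inv_eq_zero.1 this)
    have hlt : (1:ℝ≥0∞) < p := lt_of_le_of_ne hp (Ne.symm hp1)
    have := ENNReal.toReal_strict_mono hpT hlt
    simpa using this
  · have h1 : p⁻¹ ≠ ⊤ := by simp [hp0]
    have h2 : q⁻¹ ≠ ⊤ := by simp [hq0]
    have := congrArg ENNReal.toReal hpq
    rw [ENNReal.toReal_add h1 h2, ENNReal.toReal_inv, ENNReal.toReal_inv,
      ENNReal.toReal_one] at this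
    exact this

lemma opNormE_nonneg (X : Matrix m n ℝ) : 0 ≤ opNormE p X := by
  refine Real.sSup_nonneg ?_
  rintro c ⟨x, hx, rfl⟩
  exact div_nonneg (lpNormE_nonneg _) (lpNormE_nonneg _)

lemma bddAbove_opSet (hp : 1 ≤ p) (X : Matrix m n ℝ) :
    BddAbove {c | ∃ x : n → ℝ, x ≠ 0 ∧ c = lpNormE p (X.mulVec x) / lpNormE p x} := by
  refine ⟨∑ i, ∑ j, |X i j|, ?_⟩
  rintro c ⟨x, hx, rfl⟩
  have hxpos := lpNormE_pos hp hx
  rw [div_le_iff₀ hxpos]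
  calc lpNormE p (X.mulVec x) ≤ ∑ i, |X.mulVec x i| := lpNormE_le_sum_abs hp _
  _ ≤ ∑ i, ∑ j, |X i j| * lpNormE p x := by
      refine Finset.sum_le_sum fun i _ => ?_
      calc |X.mulVec x i| ≤ ∑ j, |X i j * x j| := by
            have : X.mulVec x i = ∑ j, X i j * x j := rfl
            rw [this]
            exact Finset.abs_sum_le_sum_abs _ _
      _ ≤ ∑ j, |X i j| * lpNormE p x := by
          refine Finset.sum_le_sum fun j _ => ?_
          rw [abs_mul]
          exact mul_le_mul_of_nonneg_left (abs_le_lpNormE hp x j) (abs_nonneg _)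
  _ = (∑ i, ∑ j, |X i j|) * lpNormE p x := by
      rw [Finset.sum_mul]
      exact Finset.sum_congr rfl fun i _ => by rw [Finset.sum_mul]

lemma lpNormE_mulVec_le (hp : 1 ≤ p) (X : Matrix m n ℝ) (x : n → ℝ) :
    lpNormE p (X.mulVec x) ≤ opNormE p X * lpNormE p x := by
  rcases eq_or_ne x 0 with rfl | hx
  · simp only [Matrix.mulVec_zero]
    rw [show ((0 : m → ℝ)) = (0 : m → ℝ) from rfl, lpNormE_zero hp, lpNormE_zero hp, mul_zero]
  · have hxpos := lpNormE_pos hp hx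
    have hmem : lpNormE p (X.mulVec x) / lpNormE p x ∈
        {c | ∃ x' : n → ℝ, x' ≠ 0 ∧ c = lpNormE p (X.mulVec x') / lpNormE p x'} :=
      ⟨x, hx, rfl⟩
    have h := le_csSup (bddAbove_opSet hp X) hmem
    exact (div_le_iff₀ hxpos).1 h

/-- Hölder's inequality for `lpNormE`. -/
lemma holder_sum (hp : 1 ≤ p) (hq : 1 ≤ q) (hpq : 1/p + 1/q = 1) (x y : n → ℝ) :
    ∑ i, x i * y i ≤ lpNormE p x * lpNormE q y := by
  have key : ∀ (a b : n → ℝ), ∑ i, a i * b i ≤ lpNormE ⊤ a * lpNormE 1 b := by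
    intro a b
    rw [lpNormE_one_eq]
    calc ∑ i, a i * b i ≤ ∑ i, lpNormE ⊤ a * |b i| := by
          refine Finset.sum_le_sum fun i _ => ?_
          calc a i * b i ≤ |a i * b i| := le_abs_self _
          _ = |a i| * |b i| := abs_mul _ _
          _ ≤ lpNormE ⊤ a * |b i| :=
              mul_le_mul_of_nonneg_right (abs_le_lpNormE le_top a i) (abs_nonneg _)
    _ = lpNormE ⊤ a * ∑ i, |b i| := by rw [Finset.mul_sum]
  rcases conj_cases hp hq hpq with ⟨hpT, hq1⟩ | ⟨hqT, hp1⟩ | ⟨hpT, hqT, hconj⟩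
  · subst hpT hq1; exact key x y
  · subst hqT hp1
    rw [mul_comm]
    calc ∑ i, x i * y i = ∑ i, y i * x i := by
          exact Finset.sum_congr rfl fun i _ => mul_comm _ _
    _ ≤ _ := key y x
  · have h := Real.inner_le_Lp_mul_Lq Finset.univ x y hconj
    unfold lpNormE
    rw [if_neg hpT, if_neg hqT]
    exact h

/-- Existence of a norming functional for the `ℓq` norm. -/
lemma exists_norming (hp : 1 ≤ p) (hq : 1 ≤ q) (hpq : 1/p + 1/q = 1) (v : n → ℝ) :
    ∃ z : n → ℝ, lpNormE p z ≤ 1 ∧ ∑ i, v i * z i = lpNormE q v := by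
  classical
  rcases eq_or_ne v 0 with rfl | hv
  · exact ⟨0, by rw [lpNormE_zero hp]; norm_num, by rw [lpNormE_zero hq]; simp⟩
  have hne : Nonempty n := by
    obtain ⟨i, _⟩ := Function.ne_iff.1 hv
    exact ⟨i⟩
  rcases conj_cases hp hq hpq with ⟨hpT, hq1⟩ | ⟨hqT, hp1⟩ | ⟨hpT, hqT, hconj⟩
  · -- p = ⊤, q = 1 : take z = sign of v
    subst hpT hq1
    refine ⟨fun i => if v i < 0 then -1 else 1, ?_, ?_⟩
    · unfold lpNormE
      rw [if_pos rfl]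
      refine ciSup_le fun i => ?_
      show |if v i < 0 then (-1:ℝ) else 1| ≤ 1
      split <;> norm_num
    · rw [lpNormE_one_eq]
      refine Finset.sum_congr rfl fun i _ => ?_
      show v i * (if v i < 0 then (-1:ℝ) else 1) = |v i|
      by_cases h : v i < 0
      · rw [if_pos h, abs_of_neg h]; ring
      · rw [if_neg h, abs_of_nonneg (not_lt.1 h)]; ring
  · -- q = ⊤, p = 1 : take z = signed indicator of the max
    subst hqT hp1
    obtain ⟨i₀, hi₀⟩ := Finite.exists_max fun i => |v i|
    refine ⟨fun j => if j = i₀ then (if v i₀ < 0 then -1 else 1) else 0, ?_, ?_⟩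
    · rw [lpNormE_one_eq]
      beta_reduce
      rw [Finset.sum_eq_single i₀ (fun j _ hj => by simp [hj]) (by simp)]
      rw [if_pos rfl]
      split <;> norm_num
    · have hsum : ∑ i, v i * (if i = i₀ then (if v i₀ < 0 then -1 else 1) else 0)
          = |v i₀| := by
        rw [Finset.sum_eq_single i₀ (fun j _ hj => by simp [hj]) (by simp)]
        rw [if_pos rfl]
        by_cases h : v i₀ < 0
        · rw [if_pos h, abs_of_neg h]; ring
        · rw [if_neg h, abs_of_nonneg (not_lt.1 h)]; ring
      beta_reduce
      rw [hsum]
      unfold lpNormE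
      rw [if_pos rfl]
      refine le_antisymm (le_ciSup (f := fun i => |v i|)
        (Set.Finite.bddAbove (Set.finite_range _)) i₀) (ciSup_le hi₀)
  · -- both finite
    set s := p.toReal with hs
    set t := q.toReal with ht
    have hs1 : 1 < s := hconj.lt
    have ht1 : 1 < t := hconj.symm.lt
    have hts : (t - 1) * s = t := by
      have h1 : s⁻¹ + t⁻¹ = 1 := hconj.inv_add_inv_eq_one
      field_simp at h1 ⊢
      nlinarith [h1]
    set N := lpNormE q v with hN
    have hNpos : 0 < N := lpNormE_pos hq hv
    have hsumN : ∑ i, |v i| ^ t = N ^ t := by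
      have : N = (∑ i, |v i| ^ t) ^ (1/t) := by
        rw [hN]; unfold lpNormE; rw [if_neg hqT]
      rw [this, ← Real.rpow_mul (Finset.sum_nonneg fun i _ =>
        Real.rpow_nonneg (abs_nonneg _) _), one_div,
        inv_mul_cancel₀ (by linarith : t ≠ 0), Real.rpow_one]
    refine ⟨fun i => (if v i < 0 then -1 else 1) * |v i| ^ (t-1) / N ^ (t-1), ?_, ?_⟩
    · unfold lpNormE
      rw [if_neg hpT]
      beta_reduce
      have habs : ∀ i, |(if v i < 0 then -1 else 1) * |v i| ^ (t-1) / N ^ (t-1)|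
          = |v i| ^ (t-1) / N ^ (t-1) := by
        intro i
        rw [abs_div, abs_mul]
        have h1 : |if v i < 0 then (-1:ℝ) else 1| = 1 := by split <;> norm_num
        rw [h1, one_mul, abs_of_nonneg (Real.rpow_nonneg (abs_nonneg _) _),
          abs_of_nonneg (Real.rpow_nonneg hNpos.le _)]
      have hsum1 : ∑ i, |(if v i < 0 then -1 else 1) * |v i| ^ (t-1) / N ^ (t-1)| ^ s
          = 1 := by
        have hterm : ∀ i, |(if v i < 0 then -1 else 1) * |v i| ^ (t-1) / N ^ (t-1)| ^ s
            = |v i| ^ t / N ^ t := by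
          intro i
          rw [habs i, Real.div_rpow (Real.rpow_nonneg (abs_nonneg _) _)
            (Real.rpow_nonneg hNpos.le _)]
          rw [← Real.rpow_mul (abs_nonneg _), ← Real.rpow_mul hNpos.le]
          rw [hts]
        rw [Finset.sum_congr rfl fun i _ => hterm i, ← Finset.sum_div, hsumN,
          div_self (by positivity)]
      rw [hsum1, Real.one_rpow]
    · beta_reduce
      have hterm : ∀ i, v i * ((if v i < 0 then -1 else 1) * |v i| ^ (t-1) / N ^ (t-1))
          = |v i| ^ t / N ^ (t-1) := by
        intro i
        have h1 : v i * (if v i < 0 then (-1:ℝ) else 1) = |v i| := by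
          by_cases h : v i < 0
          · rw [if_pos h, abs_of_neg h]; ring
          · rw [if_neg h, abs_of_nonneg (not_lt.1 h)]; ring
        have h2 : |v i| * |v i| ^ (t-1) = |v i| ^ t := by
          rcases eq_or_ne (v i) 0 with h0 | h0
          · rw [h0]
            simp [Real.zero_rpow (by linarith : t ≠ 0),
              Real.zero_rpow (by linarith : t - 1 ≠ 0)]
          · have habs : (0:ℝ) < |v i| := abs_pos.2 h0
            rw [show t = 1 + (t-1) by ring, Real.rpow_add habs, Real.rpow_one,
              show (1:ℝ) + (t-1) - 1 = t - 1 by ring]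
        calc v i * ((if v i < 0 then (-1:ℝ) else 1) * |v i| ^ (t-1) / N ^ (t-1))
            = (v i * (if v i < 0 then (-1:ℝ) else 1)) * |v i| ^ (t-1) / N ^ (t-1) := by
              ring
        _ = |v i| * |v i| ^ (t-1) / N ^ (t-1) := by rw [h1]
        _ = |v i| ^ t / N ^ (t-1) := by rw [h2]
      rw [Finset.sum_congr rfl fun i _ => hterm i, ← Finset.sum_div, hsumN]
      have : N ^ t = N ^ (t-1) * N := by
        rw [show t = (t-1) + 1 by ring, Real.rpow_add hNpos, Real.rpow_one,
          show t - 1 + 1 - 1 = t - 1 by ring]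
      rw [this, mul_comm, mul_div_assoc, div_self (by positivity : (N:ℝ) ^ (t-1) ≠ 0), mul_one]

lemma opNormE_transpose_le (hp : 1 ≤ p) (hq : 1 ≤ q) (hpq : 1/p + 1/q = 1)
    (X : Matrix m n ℝ) : opNormE q Xᵀ ≤ opNormE p X := by
  refine Real.sSup_le ?_ (opNormE_nonneg X)
  rintro c ⟨y, hy, rfl⟩
  have hypos := lpNormE_pos hq hy
  rw [div_le_iff₀ hypos]
  obtain ⟨z, hz1, hz2⟩ := exists_norming hp hq hpq (Xᵀ.mulVec y)
  have swap : ∑ i, Xᵀ.mulVec y i * z i = ∑ j, X.mulVec z j * y j := by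
    simp only [Matrix.mulVec, dotProduct, Matrix.transpose_apply, Finset.sum_mul]
    rw [Finset.sum_comm]
    exact Finset.sum_congr rfl fun j _ => Finset.sum_congr rfl fun i _ => by ring
  calc lpNormE q (Xᵀ.mulVec y) = ∑ i, Xᵀ.mulVec y i * z i := hz2.symm
  _ = ∑ j, X.mulVec z j * y j := swap
  _ ≤ lpNormE p (X.mulVec z) * lpNormE q y := holder_sum hp hq hpq _ _
  _ ≤ (opNormE p X * lpNormE p z) * lpNormE q y :=
      mul_le_mul_of_nonneg_right (lpNormE_mulVec_le hp X z) (lpNormE_nonneg _)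
  _ ≤ (opNormE p X * 1) * lpNormE q y := by
      refine mul_le_mul_of_nonneg_right ?_ (lpNormE_nonneg _)
      exact mul_le_mul_of_nonneg_left hz1 (opNormE_nonneg X)
  _ = opNormE p X * lpNormE q y := by ring

lemma opNormE_transpose_eq (hp : 1 ≤ p) (hq : 1 ≤ q) (hpq : 1/p + 1/q = 1)
    (X : Matrix m n ℝ) : opNormE p X = opNormE q Xᵀ := by
  refine le_antisymm ?_ (opNormE_transpose_le hp hq hpq X)
  have hqp : 1/q + 1/p = 1 := by rw [add_comm]; exact hpq
  have := opNormE_transpose_le hq hp hqp Xᵀ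
  rwa [Matrix.transpose_transpose] at this

end OpAux

/-! ### Matrix and graph auxiliary lemmas -/

section MatAux

lemma moorePenrose_symm {V : Type*} [Fintype V] {L Lp : Matrix V V ℝ}
    (hLsym : Lᵀ = L) (h : IsMoorePenrose L Lp) : Lpᵀ = Lp := by
  obtain ⟨h1, h2, h3, h4⟩ := h
  have hy1 : L * Lpᵀ * L = L := by
    have t1 := congrArg Matrix.transpose h1
    rw [Matrix.transpose_mul, Matrix.transpose_mul, hLsym] at t1
    rw [mul_assoc]
    exact t1
  have hy3 : (L * Lpᵀ)ᵀ = L * Lpᵀ := by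
    calc (L * Lpᵀ)ᵀ = (Lᵀ * Lpᵀ)ᵀ := by rw [hLsym]
    _ = ((Lp * L)ᵀ)ᵀ := by rw [← Matrix.transpose_mul]
    _ = Lp * L := Matrix.transpose_transpose _
    _ = (Lp * L)ᵀ := h4.symm
    _ = Lᵀ * Lpᵀ := Matrix.transpose_mul _ _
    _ = L * Lpᵀ := by rw [hLsym]
  have hy4 : (Lpᵀ * L)ᵀ = Lpᵀ * L := by
    calc (Lpᵀ * L)ᵀ = (Lpᵀ * Lᵀ)ᵀ := by rw [hLsym]
    _ = ((L * Lp)ᵀ)ᵀ := by rw [← Matrix.transpose_mul]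
    _ = L * Lp := Matrix.transpose_transpose _
    _ = (L * Lp)ᵀ := h3.symm
    _ = Lpᵀ * Lᵀ := Matrix.transpose_mul _ _
    _ = Lpᵀ * L := by rw [hLsym]
  have hy2 : Lpᵀ * L * Lpᵀ = Lpᵀ := by
    have t2 := congrArg Matrix.transpose h2
    rw [Matrix.transpose_mul, Matrix.transpose_mul, hLsym] at t2
    rw [mul_assoc]
    exact t2
  have key1 : L * Lpᵀ = L * Lp := by
    calc L * Lpᵀ = (L * Lp * L) * Lpᵀ := by rw [h1]
    _ = (L * Lp) * (L * Lpᵀ) := by simp only [mul_assoc]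
    _ = (L * Lp)ᵀ * (L * Lpᵀ)ᵀ := by rw [h3, hy3]
    _ = ((L * Lpᵀ) * (L * Lp))ᵀ := (Matrix.transpose_mul _ _).symm
    _ = ((L * Lpᵀ * L) * Lp)ᵀ := by simp only [mul_assoc]
    _ = (L * Lp)ᵀ := by rw [hy1]
    _ = L * Lp := h3
  have key2 : Lpᵀ * L = Lp * L := by
    calc Lpᵀ * L = Lpᵀ * (L * Lp * L) := by rw [h1]
    _ = (Lpᵀ * L) * (Lp * L) := by simp only [mul_assoc]
    _ = (Lpᵀ * L)ᵀ * (Lp * L)ᵀ := by rw [hy4, h4]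
    _ = ((Lp * L) * (Lpᵀ * L))ᵀ := (Matrix.transpose_mul _ _).symm
    _ = (Lp * (L * Lpᵀ * L))ᵀ := by simp only [mul_assoc]
    _ = (Lp * L)ᵀ := by rw [hy1]
    _ = Lp * L := h4
  calc Lpᵀ = Lpᵀ * L * Lpᵀ := hy2.symm
  _ = (Lp * L) * Lpᵀ := by rw [key2]
  _ = Lp * (L * Lpᵀ) := by rw [mul_assoc]
  _ = Lp * (L * Lp) := by rw [key1]
  _ = Lp * L * Lp := by rw [mul_assoc]
  _ = Lp := h2

lemma incMatrix_col_sum {V E : Type*} [Fintype V] [DecidableEq V]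
    (tail head : E → V) (hloop : ∀ e, tail e ≠ head e) (e : E) :
    ∑ v, incMatrix tail head v e = 0 := by
  unfold incMatrix
  have hsplit : ∀ v : V, (if v = tail e then (1:ℝ) else if v = head e then -1 else 0)
      = (if v = tail e then (1:ℝ) else 0) + (if v = head e then (-1:ℝ) else 0) := by
    intro v
    split_ifs with h1 h2
    · exact absurd (h1.symm.trans h2) (hloop e)
    · norm_num
    · norm_num
    · norm_num
  rw [Finset.sum_congr rfl fun v _ => hsplit v, Finset.sum_add_distrib]
  rw [Finset.sum_ite_eq' Finset.univ (tail e) (fun _ => (1:ℝ)),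
    Finset.sum_ite_eq' Finset.univ (head e) (fun _ => (-1:ℝ))]
  simp

lemma incMatrix_abs_le {V E : Type*} (tail head : E → V) [DecidableEq V] (v : V) (e : E) :
    |incMatrix tail head v e| ≤ 1 := by
  unfold incMatrix
  split_ifs <;> norm_num

lemma proj_eq {V : Type*} [Fintype V] {L Lp : Matrix V V ℝ}
    (hLsym : Lᵀ = L) (h : IsMoorePenrose L Lp) (hconn : IsConnectedLap L)
    (hcolL : ∀ u, ∑ v, L v u = 0)
    (χ : V → ℝ) (hχ : ∑ v, χ v = 0) :
    (L * Lp).mulVec χ = χ := by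
  classical
  obtain ⟨h1, h2, h3, h4⟩ := h
  have hLpsym : Lpᵀ = Lp := moorePenrose_symm hLsym ⟨h1, h2, h3, h4⟩
  have hLLLp : L * (L * Lp) = L := by
    calc L * (L * Lp) = L * (L * Lp)ᵀ := by rw [h3]
    _ = L * (Lpᵀ * Lᵀ) := by rw [Matrix.transpose_mul]
    _ = L * (Lp * L) := by rw [hLpsym, hLsym]
    _ = L * Lp * L := by rw [mul_assoc]
    _ = L := h1
  set w := (L * Lp).mulVec χ with hw
  set y := χ - w with hy
  have hLy : L.mulVec y = 0 := by
    rw [hy, Matrix.mulVec_sub]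
    have : L.mulVec w = L.mulVec χ := by
      rw [hw, Matrix.mulVec_mulVec, hLLLp]
    rw [this, sub_self]
  obtain ⟨c, hc⟩ := hconn y hLy
  have hcolLLp : ∀ u, ∑ v, (L * Lp) v u = 0 := by
    intro u
    have : ∀ v, (L * Lp) v u = ∑ k, L v k * Lp k u := fun v => Matrix.mul_apply
    rw [Finset.sum_congr rfl fun v _ => this v, Finset.sum_comm]
    rw [Finset.sum_congr rfl fun k _ => (Finset.sum_mul _ _ _).symm]
    rw [Finset.sum_congr rfl fun k (_ : k ∈ Finset.univ) => by rw [hcolL k, zero_mul]]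
    simp
  have hsumw : ∑ v, w v = 0 := by
    rw [hw]
    have : ∀ v, (L * Lp).mulVec χ v = ∑ u, (L * Lp) v u * χ u := fun v => rfl
    rw [Finset.sum_congr rfl fun v _ => this v, Finset.sum_comm]
    rw [Finset.sum_congr rfl fun u (_ : u ∈ Finset.univ) => (Finset.sum_mul _ _ _).symm]
    rw [Finset.sum_congr rfl fun u (_ : u ∈ Finset.univ) => by rw [hcolLLp u, zero_mul]]
    simp
  have hsumy : ∑ v, y v = 0 := by
    rw [hy]
    simp only [Pi.sub_apply, Finset.sum_sub_distrib, hχ, hsumw, sub_zero]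
  have hyzero : y = 0 := by
    rcases isEmpty_or_nonempty V with hV | hV
    · funext v; exact hV.elim v
    · have : (Fintype.card V : ℝ) * c = 0 := by
        rw [← hsumy, Finset.sum_congr rfl fun v _ => hc v]
        simp [mul_comm]
      have hcard : (Fintype.card V : ℝ) ≠ 0 := by
        simp [Fintype.card_ne_zero]
      have hc0 : c = 0 := by
        rcases mul_eq_zero.1 this with h' | h'
        · exact absurd h' hcard
        · exact h'
      funext v
      rw [hc v, hc0]
      rfl
  have : χ - w = 0 := by rw [← hy]; exact hyzero
  have := sub_eq_zero.1 this
  exact this.symm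

end MatAux

/-! ### The competitive ratio equals the operator norm of `|Π|` -/

section MainAux

lemma compRatio_eq_opNormE {V E : Type*} [Fintype V] [Fintype E] [DecidableEq V]
    (tail head : E → V) (hloop : ∀ e, tail e ≠ head e)
    (B : Matrix V E ℝ) (hB : B = incMatrix tail head)
    (L : Matrix V V ℝ) (hL : L = B * Bᵀ)
    (hconn : IsConnectedLap L)
    (Lp : Matrix V V ℝ) (hLp : IsMoorePenrose L Lp)
    (p : ℝ≥0∞) (hp : 1 ≤ p) :
    compRatio p B (Bᵀ * Lp)
      = opNormE p (fun e e' => |((Bᵀ * Lp) * B) e e'| : Matrix E E ℝ) := by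
  classical
  set A := Bᵀ * Lp with hA
  set Pmat := A * B with hPmat
  set M : Matrix E E ℝ := fun e e' => |Pmat e e'| with hMdef
  set N := opNormE p M with hNdef
  have hLsym : Lᵀ = L := by
    rw [hL, Matrix.transpose_mul, Matrix.transpose_transpose]
  have hcol : ∀ e, ∑ v, B v e = 0 := by
    intro e
    rw [hB]
    exact incMatrix_col_sum tail head hloop e
  have hcolL : ∀ u, ∑ v, L v u = 0 := by
    intro u
    rw [hL]
    have h1 : ∀ v, (B * Bᵀ) v u = ∑ e, B v e * B u e := by
      intro v
      rw [Matrix.mul_apply]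
      rfl
    rw [Finset.sum_congr rfl fun v _ => h1 v, Finset.sum_comm]
    rw [Finset.sum_congr rfl fun e (_ : e ∈ Finset.univ) => (Finset.sum_mul _ _ _).symm]
    rw [Finset.sum_congr rfl fun e (_ : e ∈ Finset.univ) => by rw [hcol e, zero_mul]]
    simp
  have hfeas : ∀ χ : V → ℝ, (∑ v, χ v = 0) → B.mulVec (A.mulVec χ) = χ := by
    intro χ hχ
    rw [Matrix.mulVec_mulVec]
    have hBA : B * A = L * Lp := by
      rw [hA, hL, Matrix.mul_assoc]
    rw [hBA]
    exact proj_eq hLsym hLp hconn hcolL χ hχ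
  have hptwise : ∀ (k : ℕ) (f : Fin k → E → ℝ) (e : E),
      ∑ i, |Pmat.mulVec (f i) e| ≤ M.mulVec (fun e' => ∑ i, |f i e'|) e := by
    intro k f e
    have step : ∀ i, |Pmat.mulVec (f i) e| ≤ ∑ e', |Pmat e e'| * |f i e'| := by
      intro i
      have h0 : Pmat.mulVec (f i) e = ∑ e', Pmat e e' * f i e' := rfl
      rw [h0]
      calc |∑ e', Pmat e e' * f i e'| ≤ ∑ e', |Pmat e e' * f i e'| :=
            Finset.abs_sum_le_sum_abs _ _
      _ = ∑ e', |Pmat e e'| * |f i e'| := Finset.sum_congr rfl fun e' _ => abs_mul _ _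
    calc ∑ i, |Pmat.mulVec (f i) e| ≤ ∑ i, ∑ e', |Pmat e e'| * |f i e'| :=
          Finset.sum_le_sum fun i _ => step i
    _ = ∑ e', ∑ i, |Pmat e e'| * |f i e'| := Finset.sum_comm
    _ = ∑ e', |Pmat e e'| * ∑ i, |f i e'| :=
          Finset.sum_congr rfl fun e' _ => (Finset.mul_sum _ _ _).symm
    _ = M.mulVec (fun e' => ∑ i, |f i e'|) e := rfl
  have hoptnn : ∀ (k : ℕ) (χ : Fin k → V → ℝ), 0 ≤ opt p B χ := by
    intro k χ
    refine Real.sInf_nonneg ?_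
    rintro c ⟨f, _, rfl⟩
    exact lpNormE_nonneg _
  have hkey : ∀ (k : ℕ) (χ : Fin k → V → ℝ) (f : Fin k → E → ℝ),
      (∀ i, B.mulVec (f i) = χ i) →
      cong p (fun i => A.mulVec (χ i)) ≤ N * cong p f := by
    intro k χ f hf
    unfold cong
    have heq : ∀ i, A.mulVec (χ i) = Pmat.mulVec (f i) := by
      intro i
      rw [← hf i, Matrix.mulVec_mulVec]
    calc lpNormE p (fun e => ∑ i, |A.mulVec (χ i) e|)
        ≤ lpNormE p (M.mulVec (fun e' => ∑ i, |f i e'|)) := by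
          refine lpNormE_mono hp fun e => ?_
          have h1 : (0:ℝ) ≤ ∑ i, |A.mulVec (χ i) e| :=
            Finset.sum_nonneg fun i _ => abs_nonneg _
          have h2 : ∑ i, |A.mulVec (χ i) e| ≤ M.mulVec (fun e' => ∑ i, |f i e'|) e := by
            rw [Finset.sum_congr rfl fun i (_ : i ∈ Finset.univ) => by rw [heq i]]
            exact hptwise k f e
          rw [abs_of_nonneg h1]
          exact le_trans h2 (le_abs_self _)
    _ ≤ N * lpNormE p (fun e' => ∑ i, |f i e'|) := lpNormE_mulVec_le hp M _
  have hratio_le : ∀ (k : ℕ) (χ : Fin k → V → ℝ), (∀ i, ∑ v, χ i v = 0) →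
      cong p (fun i => A.mulVec (χ i)) / opt p B χ ≤ N := by
    intro k χ hχ0
    have hSne : (cong p (fun i => A.mulVec (χ i))) ∈
        {c | ∃ f : Fin k → E → ℝ, (∀ i, B.mulVec (f i) = χ i) ∧ c = cong p f} :=
      ⟨fun i => A.mulVec (χ i), fun i => hfeas (χ i) (hχ0 i), rfl⟩
    rcases (hoptnn k χ).eq_or_lt with hopt0 | hoptpos
    · rw [← hopt0, _root_.div_zero]
      exact opNormE_nonneg M
    · rw [div_le_iff₀ hoptpos]
      rcases (show (0:ℝ) ≤ N from opNormE_nonneg M).eq_or_lt with hN0 | hNpos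
      · have h := hkey k χ (fun i => A.mulVec (χ i)) (fun i => hfeas (χ i) (hχ0 i))
        rw [← hN0, zero_mul] at h ⊢
        exact h
      · have hdiv : cong p (fun i => A.mulVec (χ i)) / N ≤ opt p B χ := by
          refine le_csInf ⟨_, hSne⟩ ?_
          rintro d ⟨f, hf, rfl⟩
          exact (div_le_iff₀ hNpos).2 (by rw [mul_comm]; exact hkey k χ f hf)
        have := (div_le_iff₀ hNpos).1 hdiv
        -- this : cong ≤ opt * N
        rw [mul_comm] at this
        exact this
  have hbdd : BddAbove {r | ∃ (k : ℕ) (χ : Fin k → V → ℝ), (∀ i, ∑ v, χ i v = 0) ∧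
      r = cong p (fun i => A.mulVec (χ i)) / opt p B χ} := by
    refine ⟨N, ?_⟩
    rintro r ⟨k, χ, hχ0, rfl⟩
    exact hratio_le k χ hχ0
  have hcrnn : 0 ≤ compRatio p B A := by
    refine Real.sSup_nonneg ?_
    rintro r ⟨k, χ, hχ0, rfl⟩
    exact div_nonneg (lpNormE_nonneg _) (hoptnn k χ)
  refine le_antisymm ?_ ?_
  · -- compRatio ≤ opNormE
    refine Real.sSup_le ?_ (opNormE_nonneg M)
    rintro r ⟨k, χ, hχ0, rfl⟩
    exact hratio_le k χ hχ0
  · -- opNormE ≤ compRatio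
    refine Real.sSup_le ?_ hcrnn
    rintro c ⟨x, hx, rfl⟩
    have hEne : Nonempty E := by
      obtain ⟨e, _⟩ := Function.ne_iff.1 hx
      exact ⟨e⟩
    set k := Fintype.card E with hk
    set ι : Fin k ≃ E := (Fintype.equivFin E).symm with hι
    set χ : Fin k → V → ℝ := fun i v => B v (ι i) * x (ι i) with hχdef
    have hχ0 : ∀ i, ∑ v, χ i v = 0 := by
      intro i
      calc ∑ v, B v (ι i) * x (ι i) = (∑ v, B v (ι i)) * x (ι i) :=
            (Finset.sum_mul _ _ _).symm
      _ = 0 := by rw [hcol, zero_mul]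
    have hAχ : (fun e => ∑ i, |A.mulVec (χ i) e|) = M.mulVec (fun e' => |x e'|) := by
      funext e
      have h1 : ∀ i, A.mulVec (χ i) e = Pmat e (ι i) * x (ι i) := by
        intro i
        have h0 : A.mulVec (χ i) e = ∑ v, A e v * (B v (ι i) * x (ι i)) := rfl
        rw [h0]
        calc ∑ v, A e v * (B v (ι i) * x (ι i))
            = ∑ v, (A e v * B v (ι i)) * x (ι i) :=
              Finset.sum_congr rfl fun v _ => (mul_assoc _ _ _).symm
        _ = (∑ v, A e v * B v (ι i)) * x (ι i) := (Finset.sum_mul _ _ _).symm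
        _ = Pmat e (ι i) * x (ι i) := by rw [hPmat, Matrix.mul_apply]
      calc ∑ i, |A.mulVec (χ i) e| = ∑ i, |Pmat e (ι i)| * |x (ι i)| := by
            refine Finset.sum_congr rfl fun i _ => ?_
            rw [h1 i, abs_mul]
      _ = ∑ e', |Pmat e e'| * |x e'| := ι.sum_comp fun e' => |Pmat e e'| * |x e'|
      _ = M.mulVec (fun e' => |x e'|) e := rfl
    have hcongA : cong p (fun i => A.mulVec (χ i))
        = lpNormE p (M.mulVec fun e' => |x e'|) := by
      unfold cong
      rw [hAχ]
    set f : Fin k → E → ℝ := fun i e => if e = ι i then x e else 0 with hfdef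
    have hffeas : ∀ i, B.mulVec (f i) = χ i := by
      intro i
      funext v
      have h0 : B.mulVec (f i) v = ∑ e, B v e * (if e = ι i then x e else 0) := rfl
      rw [h0, Finset.sum_eq_single (ι i)
        (fun e _ he => by rw [if_neg he, mul_zero])
        (fun hmem => absurd (Finset.mem_univ _) hmem)]
      rw [if_pos rfl]
    have hcongf : cong p f = lpNormE p x := by
      unfold cong
      have hterm : ∀ j e', f j e' = if e' = ι j then x e' else 0 := by
        intro j e'
        simp only [hfdef]
      have h0 : (fun e => ∑ i, |f i e|) = fun e => |x e| := by
        funext e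
        calc ∑ i, |f i e| = ∑ i, |if e = ι i then x e else 0| :=
              Finset.sum_congr rfl fun j _ => by rw [hterm j e]
        _ = |x e| := by
            rw [Finset.sum_eq_single (ι.symm e)
              (fun j _ hj => by
                have hne : e ≠ ι j := fun h => hj (by rw [h, Equiv.symm_apply_apply])
                rw [if_neg hne, abs_zero])
              (fun hmem => absurd (Finset.mem_univ _) hmem)]
            rw [if_pos (ι.apply_symm_apply e).symm]
      rw [h0, lpNormE_abs]
    have hoptle : opt p B χ ≤ lpNormE p x := by
      refine csInf_le ⟨0, ?_⟩ ⟨f, hffeas, hcongf.symm⟩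
      rintro d ⟨g, _, rfl⟩
      exact lpNormE_nonneg _
    have hMxle : lpNormE p (M.mulVec x) ≤ lpNormE p (M.mulVec fun e' => |x e'|) := by
      refine lpNormE_mono hp fun e => ?_
      have h3 : (0:ℝ) ≤ M.mulVec (fun e' => |x e'|) e :=
        Finset.sum_nonneg fun e' _ => mul_nonneg (abs_nonneg _) (abs_nonneg _)
      have h2 : |M.mulVec x e| ≤ M.mulVec (fun e' => |x e'|) e := by
        have h0 : M.mulVec x e = ∑ e', |Pmat e e'| * x e' := rfl
        rw [h0]
        calc |∑ e', |Pmat e e'| * x e'| ≤ ∑ e', |(|Pmat e e'| * x e')| :=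
              Finset.abs_sum_le_sum_abs _ _
        _ = ∑ e', |Pmat e e'| * |x e'| := by
            refine Finset.sum_congr rfl fun e' _ => ?_
            rw [abs_mul, abs_abs]
        _ = M.mulVec (fun e' => |x e'|) e := rfl
      exact h2.trans (le_abs_self _)
    rcases (lpNormE_nonneg (p := p) (M.mulVec fun e' => |x e'|)).eq_or_lt with hz | hposn
    · have hzero : lpNormE p (M.mulVec x) = 0 :=
        le_antisymm (hMxle.trans hz.symm.le) (lpNormE_nonneg _)
      rw [hzero, zero_div]
      exact hcrnn
    · have hex : ∃ i₀ v₀, χ i₀ v₀ ≠ 0 := by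
        by_contra hno
        push_neg at hno
        have hzv : (fun e => ∑ i, |A.mulVec (χ i) e|) = fun _ => 0 := by
          funext e
          have hall : ∀ i, A.mulVec (χ i) = 0 := by
            intro i
            have : χ i = 0 := funext fun v => hno i v
            rw [this, Matrix.mulVec_zero]
          refine Finset.sum_eq_zero fun i _ => ?_
          rw [hall i]
          simp
        rw [← hAχ, hzv] at hposn
        have : lpNormE p (fun _ : E => (0:ℝ)) = 0 := by
          have : (fun _ : E => (0:ℝ)) = (0 : E → ℝ) := rfl
          rw [this, lpNormE_zero hp]
        rw [this] at hposn
        exact lt_irrefl 0 hposn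
      obtain ⟨i₀, v₀, hne0⟩ := hex
      have hcardpos : (0:ℝ) < Fintype.card E := by
        exact_mod_cast Fintype.card_pos
      have hoptpos : 0 < opt p B χ := by
        refine lt_of_lt_of_le
          (show (0:ℝ) < |χ i₀ v₀| / Fintype.card E by positivity) ?_
        refine le_csInf ⟨_, ⟨f, hffeas, rfl⟩⟩ ?_
        rintro d ⟨g, hg, rfl⟩
        rw [div_le_iff₀ hcardpos]
        have hstep : ∀ e : E, ∑ i, |g i e| ≤ cong p g := by
          intro e
          have h0 : (0:ℝ) ≤ ∑ i, |g i e| := Finset.sum_nonneg fun i _ => abs_nonneg _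
          have h1 := abs_le_lpNormE hp (fun e => ∑ i, |g i e|) e
          rwa [abs_of_nonneg h0] at h1
        calc |χ i₀ v₀| = |B.mulVec (g i₀) v₀| := by rw [hg i₀]
        _ ≤ ∑ e, |B v₀ e * g i₀ e| := by
            have h0 : B.mulVec (g i₀) v₀ = ∑ e, B v₀ e * g i₀ e := rfl
            rw [h0]
            exact Finset.abs_sum_le_sum_abs _ _
        _ ≤ ∑ e, |g i₀ e| := by
            refine Finset.sum_le_sum fun e _ => ?_
            rw [abs_mul]
            have hb1 : |B v₀ e| ≤ 1 := by
              rw [hB]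
              exact incMatrix_abs_le tail head v₀ e
            calc |B v₀ e| * |g i₀ e| ≤ 1 * |g i₀ e| :=
                  mul_le_mul_of_nonneg_right hb1 (abs_nonneg _)
            _ = |g i₀ e| := one_mul _
        _ ≤ ∑ e, ∑ i, |g i e| := by
            refine Finset.sum_le_sum fun e _ => ?_
            exact Finset.single_le_sum (f := fun i => |g i e|)
              (fun i _ => abs_nonneg _) (Finset.mem_univ i₀)
        _ ≤ ∑ _e : E, cong p g := Finset.sum_le_sum fun e _ => hstep e
        _ = Fintype.card E * cong p g := by
            rw [Finset.sum_const, nsmul_eq_mul, Finset.card_univ]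
        _ = cong p g * Fintype.card E := mul_comm _ _
      calc lpNormE p (M.mulVec x) / lpNormE p x
          ≤ lpNormE p (M.mulVec fun e' => |x e'|) / opt p B χ :=
            div_le_div₀ (lpNormE_nonneg _) hMxle hoptpos hoptle
      _ = cong p (fun i => A.mulVec (χ i)) / opt p B χ := by rw [hcongA]
      _ ≤ compRatio p B A := le_csSup hbdd ⟨k, χ, hχ0, rfl⟩

end MainAux

/-- For conjugate exponents `p, q ∈ [1,∞]`, the ℓp and ℓq multi-commodity
competitive ratios of the electrical routing `A_ℰ = Bᵀ L⁺` coincide. -/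
theorem compRatio_conjugate_eq (tail head : E → V) (hloop : ∀ e, tail e ≠ head e)
    (B : Matrix V E ℝ) (hB : B = incMatrix tail head)
    (L : Matrix V V ℝ) (hL : L = B * Bᵀ)
    (hconn : IsConnectedLap L)
    (Lp : Matrix V V ℝ) (hLp : IsMoorePenrose L Lp)
    (p q : ℝ≥0∞) (hp : 1 ≤ p) (hq : 1 ≤ q) (hpq : 1 / p + 1 / q = 1) :
    compRatio p B (Bᵀ * Lp) = compRatio q B (Bᵀ * Lp) := by
  have hLsym : Lᵀ = L := by
    rw [hL, Matrix.transpose_mul, Matrix.transpose_transpose]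
  have hLpsym : Lpᵀ = Lp := moorePenrose_symm hLsym hLp
  have hPsym : ((Bᵀ * Lp) * B)ᵀ = (Bᵀ * Lp) * B := by
    rw [Matrix.transpose_mul, Matrix.transpose_mul, Matrix.transpose_transpose,
      hLpsym, Matrix.mul_assoc]
  have hMsym : (fun e e' => |((Bᵀ * Lp) * B) e e'| : Matrix E E ℝ)ᵀ
      = (fun e e' => |((Bᵀ * Lp) * B) e e'| : Matrix E E ℝ) := by
    funext e e'
    show |((Bᵀ * Lp) * B) e' e| = |((Bᵀ * Lp) * B) e e'|
    calc |((Bᵀ * Lp) * B) e' e| = |(((Bᵀ * Lp) * B)ᵀ) e e'| := rfl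
    _ = |((Bᵀ * Lp) * B) e e'| := by rw [hPsym]
  calc compRatio p B (Bᵀ * Lp)
      = opNormE p (fun e e' => |((Bᵀ * Lp) * B) e e'| : Matrix E E ℝ) :=
        compRatio_eq_opNormE tail head hloop B hB L hL hconn Lp hLp p hp
  _ = opNormE q ((fun e e' => |((Bᵀ * Lp) * B) e e'| : Matrix E E ℝ)ᵀ) :=
        opNormE_transpose_eq hp hq hpq _
  _ = opNormE q (fun e e' => |((Bᵀ * Lp) * B) e e'| : Matrix E E ℝ) := by rw [hMsym]
  _ = compRatio q B (Bᵀ * Lp) :=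
        (compRatio_eq_opNormE tail head hloop B hB L hL hconn Lp hLp q hq).symm
end
end
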